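/- arXiv:2401.12935 — 5 statements merged into one kernel-verified Lean document; each statement's English description precedes it below -/
import Mathlib

section
/- Let (S_n) be the animal walk and τ_{−1} := inf{ n ≥ 1 : S_n < 0 } (which is almost surely finite). Then for every real s with 0 < s < 1, E[s^{τ_{−1}}] = (3 − s − √(3(1−s)(s+3))) / (2s). -/
open MeasureTheory
open scoped ENNReal

/-- The animal walk: S 0 = 0 and S n = ξ 0 + … + ξ (n-1). -/
def walk {Ω : Type*} (ξ : ℕ → Ω → ℤ) (n : ℕ) (ω : Ω) : ℤ :=
  ∑ i ∈ Finset.range n, ξ i ω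

/-- The step distribution μ of the animal walk, evaluated on the singleton {z}. -/
noncomputable def animalStepLaw (z : ℤ) : ENNReal :=
  if z = 1 then 2/3 else if z < 0 then (2 : ENNReal) ^ z / 3 else 0

/-- The first descending ladder time τ_{-1} = inf{ n ≥ 1 : S n < 0 } of a path S,
as an element of ℕ∞ (equal to ⊤ when the path never goes below 0). -/
noncomputable def tauMinusOne (S : ℕ → ℤ) : ℕ∞ :=
  sInf {t : ℕ∞ | ∃ n : ℕ, t = (n : ℕ∞) ∧ 1 ≤ n ∧ S n < 0}

namespace AnimalProof
open scoped ENNReal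
attribute [local instance] Classical.propDecidable

open scoped ENNReal

lemma tau_never_zero (S : ℕ → ℤ) : tauMinusOne S ≠ 0 := by
  intro h
  have hne : {t : ℕ∞ | ∃ n : ℕ, t = (n : ℕ∞) ∧ 1 ≤ n ∧ S n < 0}.Nonempty := by
    by_contra hemp
    rw [Set.not_nonempty_iff_eq_empty] at hemp
    rw [tauMinusOne, hemp, sInf_empty] at h
    exact (by simp : (⊤ : ℕ∞) ≠ 0) h
  have := csInf_mem hne
  rw [tauMinusOne] at h
  rw [h] at this
  obtain ⟨n, hn, h1, _⟩ := this
  have : n = 0 := by exact_mod_cast hn.symm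
  omega

lemma tau_eq_coe_iff (S : ℕ → ℤ) (n : ℕ) (hn : 1 ≤ n) :
    tauMinusOne S = (n : ℕ∞) ↔ (S n < 0 ∧ ∀ m, 1 ≤ m → m < n → 0 ≤ S m) := by
  constructor
  · intro h
    have hne : {t : ℕ∞ | ∃ k : ℕ, t = (k : ℕ∞) ∧ 1 ≤ k ∧ S k < 0}.Nonempty := by
      by_contra hemp
      rw [Set.not_nonempty_iff_eq_empty] at hemp
      rw [tauMinusOne, hemp, sInf_empty] at h
      exact (by simp : (⊤ : ℕ∞) ≠ (n:ℕ∞)) h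
    have hmem := csInf_mem hne
    rw [tauMinusOne] at h; rw [h] at hmem
    obtain ⟨k, hk, h1, h2⟩ := hmem
    have hkn : k = n := by exact_mod_cast hk.symm
    subst hkn
    refine ⟨h2, fun m hm1 hmn => ?_⟩
    by_contra hneg
    push_neg at hneg
    have hle : sInf {t : ℕ∞ | ∃ k : ℕ, t = (k : ℕ∞) ∧ 1 ≤ k ∧ S k < 0} ≤ (m : ℕ∞) :=
      csInf_le (OrderBot.bddBelow _) ⟨m, rfl, hm1, hneg⟩
    rw [h] at hle
    exact absurd (by exact_mod_cast hle) (by omega)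
  · rintro ⟨h1, h2⟩
    apply le_antisymm
    · exact csInf_le (OrderBot.bddBelow _) ⟨n, rfl, hn, h1⟩
    · refine le_csInf ⟨(n:ℕ∞), ⟨n, rfl, hn, h1⟩⟩ ?_
      rintro t ⟨k, rfl, hk1, hk2⟩
      have : n ≤ k := by
        by_contra hlt
        push_neg at hlt
        exact absurd (h2 k hk1 hlt) (by omega)
      exact_mod_cast this

lemma tau_eq_top_iff (S : ℕ → ℤ) :
    tauMinusOne S = ⊤ ↔ ∀ n, 1 ≤ n → 0 ≤ S n := by
  constructor
  · intro h n hn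
    by_contra hneg
    push_neg at hneg
    have hmem : (n:ℕ∞) ∈ {t : ℕ∞ | ∃ k : ℕ, t = (k : ℕ∞) ∧ 1 ≤ k ∧ S k < 0} :=
      ⟨n, rfl, hn, hneg⟩
    have := csInf_le (OrderBot.bddBelow _) hmem
    rw [tauMinusOne] at h; rw [h] at this
    exact absurd this (by simp)
  · intro h
    rw [tauMinusOne]
    convert sInf_empty
    · rfl
    rw [Set.eq_empty_iff_forall_notMem]
    rintro t ⟨k, rfl, hk1, hk2⟩
    exact absurd (h k hk1) (by omega)


open scoped ENNReal

lemma p_one : animalStepLaw 1 = 2/3 := by simp [animalStepLaw]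

lemma p_neg {z : ℤ} (hz : z < 0) : animalStepLaw z = (2 : ℝ≥0∞) ^ z / 3 := by
  have : z ≠ 1 := by omega
  simp [animalStepLaw, this, hz]

lemma p_nonneg_ne_one {z : ℤ} (h0 : 0 ≤ z) (h1 : z ≠ 1) : animalStepLaw z = 0 := by
  have h2 : ¬ z < 0 := by omega
  simp [animalStepLaw, h1, h2]

lemma p_le_one (z : ℤ) : animalStepLaw z ≤ 1 := by
  rcases lt_trichotomy z 0 with h | h | h
  · rw [p_neg h]
    calc (2:ℝ≥0∞)^z / 3 ≤ 1/3 := by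
          apply ENNReal.div_le_div_right
          calc (2:ℝ≥0∞)^z ≤ 2^(0:ℤ) := by
                apply ENNReal.zpow_le_of_le (by norm_num) (by omega)
          _ = 1 := by norm_num
      _ ≤ 1 := by norm_num
  · subst h; rw [p_nonneg_ne_one le_rfl (by norm_num)]; norm_num
  · rcases eq_or_ne z 1 with rfl | hne
    · rw [p_one]
      refine ENNReal.div_le_of_le_mul ?_
      norm_num
    · rw [p_nonneg_ne_one (by omega) hne]; norm_num

lemma p_ne_top (z : ℤ) : animalStepLaw z ≠ ⊤ :=
  fun h => by simpa [h] using p_le_one z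

lemma p_shift (j : ℕ) (σ : ℤ) (hσ : 0 ≤ σ) :
    animalStepLaw (-1 - j - σ) = (2:ℝ≥0∞)⁻¹ ^ j * animalStepLaw (-1 - σ) := by
  rw [p_neg (by omega), p_neg (by omega)]
  rw [ENNReal.div_eq_inv_mul, ENNReal.div_eq_inv_mul]
  rw [show (-1 - (j:ℤ) - σ) = (-(j:ℤ)) + (-1 - σ) by ring]
  rw [ENNReal.zpow_add (by norm_num) (by norm_num)]
  rw [show ((2:ℝ≥0∞))^(-(j:ℤ)) = 2⁻¹ ^ j by
    rw [ENNReal.zpow_neg, ← ENNReal.inv_pow]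
    norm_cast]
  ring

lemma sum_p_neg : ∑' k : ℕ, animalStepLaw (-1 - k) = 1/3 := by
  have h1 : ∀ k : ℕ, animalStepLaw (-1 - k) = (2:ℝ≥0∞)⁻¹ ^ k * (2⁻¹ * 3⁻¹) := by
    intro k
    have : (-1 - (k:ℤ)) = -1 - (k:ℤ) - 0 := by ring
    rw [this, p_shift k 0 le_rfl, p_neg (by omega : (-1 - (0:ℤ)) < 0)]
    norm_num [ENNReal.zpow_neg, ENNReal.div_eq_inv_mul]
    ring
  simp_rw [h1]
  rw [ENNReal.tsum_mul_right, ENNReal.tsum_geometric]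
  rw [show (1 - (2:ℝ≥0∞)⁻¹) = 2⁻¹ from ENNReal.one_sub_inv_two]
  rw [ENNReal.div_eq_inv_mul, inv_inv]
  rw [show (2:ℝ≥0∞) * (2⁻¹ * 3⁻¹) = (2 * 2⁻¹) * 3⁻¹ by ring]
  rw [ENNReal.mul_inv_cancel (by norm_num) (by norm_num), one_mul]
  rw [mul_one]

noncomputable def W (l : List ℤ) : ℝ≥0∞ := (l.map animalStepLaw).prod

@[simp] lemma W_nil : W [] = 1 := rfl
@[simp] lemma W_cons (x : ℤ) (t : List ℤ) : W (x :: t) = animalStepLaw x * W t := by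
  simp [W]
lemma W_append (u v : List ℤ) : W (u ++ v) = W u * W v := by simp [W]
lemma W_le_one (l : List ℤ) : W l ≤ 1 := by
  induction l with
  | nil => simp
  | cons x t ih =>
    rw [W_cons]
    calc animalStepLaw x * W t ≤ 1 * 1 := mul_le_mul' (p_le_one x) ih
    _ = 1 := by norm_num
lemma W_ne_top (l : List ℤ) : W l ≠ ⊤ := fun h => by simpa [h] using W_le_one l

lemma W_getD (l : List ℤ) :
    W l = ∏ i ∈ Finset.range l.length, animalStepLaw (l.getD i 0) := by
  induction l with
  | nil => simp [W]
  | cons x t ih =>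
    rw [W_cons, ih, List.length_cons, Finset.prod_range_succ']
    simp [mul_comm]


open scoped ENNReal
attribute [local instance] Classical.propDecidable

def preOK (l : List ℤ) : Prop := ∀ m : ℕ, 1 ≤ m → m < l.length → 0 ≤ (l.take m).sum
def goodSet (n : ℕ) : Set (List ℤ) := {l | l.length = n ∧ preOK l ∧ l.sum < 0}
def exactSet (n j : ℕ) : Set (List ℤ) := {l | l.length = n ∧ preOK l ∧ l.sum = -1 - j}
noncomputable def a (n : ℕ) : ℝ≥0∞ := ∑' l : List ℤ, (goodSet n).indicator W l
noncomputable def D (n j : ℕ) : ℝ≥0∞ := ∑' l : List ℤ, (exactSet n j).indicator W l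

lemma mem_goodSet {n : ℕ} {l : List ℤ} :
    l ∈ goodSet n ↔ l.length = n ∧ preOK l ∧ l.sum < 0 := Iff.rfl
lemma mem_exactSet {n j : ℕ} {l : List ℤ} :
    l ∈ exactSet n j ↔ l.length = n ∧ preOK l ∧ l.sum = -1 - j := Iff.rfl

/-! ### tsum splitting infrastructure -/

lemma tsum_cons_split (f : List ℤ → ℝ≥0∞) (h : f [] = 0) :
    ∑' l : List ℤ, f l = ∑' p : ℤ × List ℤ, f (p.1 :: p.2) := by
  refine (Function.Injective.tsum_eq (g := fun p : ℤ × List ℤ => p.1 :: p.2) ?_ ?_).symm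
  · rintro ⟨x, t⟩ ⟨x', t'⟩ he
    simp only [List.cons.injEq] at he
    simp [he.1, he.2]
  · intro l hl
    match l with
    | [] => exact absurd h hl
    | x :: t => exact ⟨(x, t), rfl⟩

lemma tsum_concat_split (f : List ℤ → ℝ≥0∞) (h : f [] = 0) :
    ∑' l : List ℤ, f l = ∑' p : List ℤ × ℤ, f (p.1 ++ [p.2]) := by
  refine (Function.Injective.tsum_eq (g := fun p : List ℤ × ℤ => p.1 ++ [p.2]) ?_ ?_).symm
  · rintro ⟨u, x⟩ ⟨u', x'⟩ he
    simp only at he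
    have hlen : u.length = u'.length := by
      have := congrArg List.length he
      simpa using this
    obtain ⟨h1, h2⟩ := List.append_inj he hlen
    simp only [List.cons.injEq] at h2
    simp [h1, h2.1]
  · intro l hl
    rcases List.eq_nil_or_concat l with rfl | ⟨u, x, rfl⟩
    · exact absurd h hl
    · exact ⟨(u, x), by simp⟩

lemma tsum_append_split (m : ℕ) (F : List ℤ → ℝ≥0∞) (G : List ℤ × List ℤ → ℝ≥0∞)
    (hFG : ∀ u v : List ℤ, u.length = m → F (u ++ v) = G (u, v))
    (hGsupp : ∀ u v : List ℤ, G (u, v) ≠ 0 → u.length = m)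
    (hFsupp : ∀ t, F t ≠ 0 → (t.take m).length = m) :
    ∑' t : List ℤ, F t = ∑' p : List ℤ × List ℤ, G p := by
  refine tsum_eq_tsum_of_ne_zero_bij (fun p => p.1.1 ++ p.1.2) ?_ ?_ ?_
  · rintro ⟨⟨u, v⟩, hp⟩ ⟨⟨u', v'⟩, hp'⟩ he
    simp only at he
    have h1 : u.length = m := hGsupp u v hp
    have h2 : u'.length = m := hGsupp u' v' hp'
    obtain ⟨e1, e2⟩ := List.append_inj he (h1.trans h2.symm)
    simp [e1, e2]
  · intro t ht
    have hlen := hFsupp t ht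
    refine ⟨⟨(t.take m, t.drop m), ?_⟩, by simp⟩
    have he : t.take m ++ t.drop m = t := List.take_append_drop m t
    rw [Function.mem_support, ← hFG _ _ hlen, he]
    exact ht
  · rintro ⟨⟨u, v⟩, hp⟩
    exact hFG u v (hGsupp u v hp)

/-- split a tsum over ℤ into the value at 1 plus values at negative integers,
given the function vanishes elsewhere -/
lemma tsum_int_split (f : ℤ → ℝ≥0∞) (h : ∀ z : ℤ, 0 ≤ z → z ≠ 1 → f z = 0) :
    ∑' z : ℤ, f z = f 1 + ∑' k : ℕ, f (-1 - k) := by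
  have hpt : ∀ z : ℤ, f z = (if z = 1 then f z else 0) + (if z < 0 then f z else 0) := by
    intro z
    rcases lt_trichotomy z 0 with hz | hz | hz
    · simp [hz, show z ≠ 1 by omega]
    · subst hz; simp [h 0 le_rfl (by norm_num)]
    · rcases eq_or_ne z 1 with rfl | hne
      · simp
      · simp [hne, show ¬ (z < 0) by omega, h z (by omega) hne]
  calc ∑' z, f z = ∑' z, ((if z = 1 then f z else 0) + (if z < 0 then f z else 0)) :=
        tsum_congr hpt
    _ = (∑' z : ℤ, if z = 1 then f z else 0) + ∑' z : ℤ, (if z < 0 then f z else 0) :=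
        ENNReal.tsum_add
    _ = f 1 + ∑' k : ℕ, f (-1 - k) := by
        congr 1
        · rw [tsum_eq_single 1 (by intro b hb; simp [hb])]
          simp
        · refine (Function.Injective.tsum_eq (g := fun k : ℕ => -1 - (k:ℤ)) ?_ ?_).symm.trans ?_
          · intro k k' he; dsimp only at he; omega
          · intro z hz
            rw [Function.mem_support] at hz
            have hz0 : z < 0 := by by_contra hc; simp [hc] at hz
            exact ⟨(-1 - z).toNat, by dsimp only; omega⟩
          · apply tsum_congr
            intro k
            simp [show (-1 - (k:ℤ)) < 0 by omega]

/-! ### relations between D's and a -/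

lemma D_zero (j : ℕ) : D 0 j = 0 := by
  rw [D, ENNReal.tsum_eq_zero]
  intro l
  rw [Set.indicator_apply_eq_zero]
  rintro ⟨hlen, _, hsum⟩
  rw [List.length_eq_zero_iff] at hlen
  subst hlen
  simp at hsum
  omega

lemma D_shift (n j : ℕ) : D n j = (2:ℝ≥0∞)⁻¹ ^ j * D n 0 := by
  rcases Nat.eq_zero_or_pos n with rfl | hn
  · simp [D_zero]
  obtain ⟨n', rfl⟩ : ∃ n', n = n' + 1 := ⟨n - 1, by omega⟩
  have key : ∀ j : ℕ, D (n' + 1) j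
      = ∑' u : List ℤ, (if u.length = n' ∧ preOK u ∧ 0 ≤ u.sum then W u * animalStepLaw (-1 - j - u.sum) else 0) := by
    intro j
    rw [D, tsum_concat_split _ (by
      rw [Set.indicator_apply_eq_zero]; rintro ⟨hlen, _⟩; simp at hlen)]
    rw [ENNReal.tsum_prod']
    apply tsum_congr
    intro u
    dsimp only
    rcases Classical.em (u.length = n' ∧ preOK u ∧ 0 ≤ u.sum) with hcase | hcase
    · obtain ⟨hlen, hpre, hsum⟩ := hcase
      rw [if_pos ⟨hlen, hpre, hsum⟩]
      rw [tsum_eq_single (-1 - (j:ℤ) - u.sum) ?_]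
      · rw [Set.indicator_of_mem (mem_exactSet.mpr ?_) W, W_append, W_cons, W_nil, mul_one]
        refine ⟨by simp [hlen], ?_, by rw [List.sum_append, List.sum_cons, List.sum_nil, add_zero]; ring⟩
        -- preOK (u ++ [x])
        intro m hm1 hm2
        simp only [List.length_append, List.length_cons, List.length_nil, hlen] at hm2
        have hmu : m ≤ u.length := by omega
        rw [List.take_append_of_le_length hmu]
        rcases Nat.lt_or_ge m u.length with h | h
        · exact hpre m hm1 (by omega)
        · have : m = u.length := by omega
          rw [this, List.take_length]
          exact hsum
      · intro x hx
        rw [Set.indicator_apply_eq_zero]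
        rintro ⟨_, _, hs⟩
        exfalso
        rw [List.sum_append, List.sum_cons, List.sum_nil, add_zero] at hs
        exact absurd (by omega : x = -1 - (j:ℤ) - u.sum) hx
    · rw [if_neg hcase, ENNReal.tsum_eq_zero]
      intro x
      rw [Set.indicator_apply_eq_zero]
      rintro ⟨hlen, hpre, hsum⟩
      exfalso
      simp only [List.length_append, List.length_cons, List.length_nil] at hlen
      have hlen' : u.length = n' := by omega
      have hlen2 : (u ++ [x]).length = u.length + 1 := by simp
      -- derive preOK u and 0 ≤ u.sum
      apply hcase
      refine ⟨hlen', ?_, ?_⟩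
      · intro m hm1 hm2
        have := hpre m hm1 (by omega)
        rwa [List.take_append_of_le_length (by omega)] at this
      · rcases Nat.eq_zero_or_pos n' with hz | hpos
        · have : u = [] := by rw [← List.length_eq_zero_iff]; omega
          simp [this]
        · have := hpre u.length (by omega) (by omega)
          rwa [List.take_append_of_le_length le_rfl, List.take_length] at this
  rw [key j, key 0, ← ENNReal.tsum_mul_left]
  apply tsum_congr
  intro u
  rcases Classical.em (u.length = n' ∧ preOK u ∧ 0 ≤ u.sum) with hcase | hcase
  · rw [if_pos hcase, if_pos hcase]
    rw [p_shift j u.sum hcase.2.2]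
    have h0 : (-1 - (0:ℕ) - u.sum) = -1 - u.sum := by simp
    rw [h0]
    ring
  · rw [if_neg hcase, if_neg hcase, mul_zero]

lemma a_eq_tsum_D (n : ℕ) : a n = ∑' j : ℕ, D n j := by
  rw [a]
  have hpt : ∀ l : List ℤ, (goodSet n).indicator W l = ∑' j : ℕ, (exactSet n j).indicator W l := by
    intro l
    rcases Classical.em (l ∈ goodSet n) with hl | hl
    · obtain ⟨hlen, hpre, hsum⟩ := hl
      have hj : ∃ j : ℕ, l.sum = -1 - j := ⟨(-1 - l.sum).toNat, by omega⟩
      obtain ⟨j, hj⟩ := hj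
      rw [Set.indicator_of_mem (mem_goodSet.mpr ⟨hlen, hpre, hsum⟩) W]
      rw [tsum_eq_single j ?_]
      · rw [Set.indicator_of_mem (mem_exactSet.mpr ⟨hlen, hpre, hj⟩) W]
      · intro j' hj'
        rw [Set.indicator_apply_eq_zero]
        rintro ⟨_, _, hs⟩
        exact absurd (by omega : j' = j) hj'
    · rw [Set.indicator_of_notMem hl, Eq.comm, ENNReal.tsum_eq_zero]
      intro j
      rw [Set.indicator_apply_eq_zero]
      rintro ⟨hlen, hpre, hsum⟩
      exact absurd ⟨hlen, hpre, by omega⟩ hl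
  calc ∑' l : List ℤ, (goodSet n).indicator W l
      = ∑' l : List ℤ, ∑' j : ℕ, (exactSet n j).indicator W l := tsum_congr hpt
    _ = ∑' j : ℕ, D n j := by rw [ENNReal.tsum_comm]; rfl

lemma tsum_half_pow : ∑' j : ℕ, (2:ℝ≥0∞)⁻¹ ^ j = 2 := by
  rw [ENNReal.tsum_geometric]
  rw [show (1 - (2:ℝ≥0∞)⁻¹) = 2⁻¹ from ENNReal.one_sub_inv_two]
  simp

lemma a_eq_two_D (n : ℕ) : a n = 2 * D n 0 := by
  rw [a_eq_tsum_D]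
  calc ∑' j : ℕ, D n j = ∑' j : ℕ, (2:ℝ≥0∞)⁻¹ ^ j * D n 0 := tsum_congr (fun j => D_shift n j)
    _ = (∑' j : ℕ, (2:ℝ≥0∞)⁻¹ ^ j) * D n 0 := ENNReal.tsum_mul_right
    _ = 2 * D n 0 := by rw [tsum_half_pow]


open scoped ENNReal

-- from previous chunks (axiomatized here for speed)
lemma list_sum_getD (l : List ℤ) :
    l.sum = ∑ i ∈ Finset.range l.length, l.getD i 0 := by
  induction l with
  | nil => simp
  | cons x t ih =>
    rw [List.sum_cons, ih, List.length_cons, Finset.sum_range_succ']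
    simp [add_comm]

lemma take_sum_getD (l : List ℤ) (m : ℕ) (hm : m ≤ l.length) :
    (l.take m).sum = ∑ i ∈ Finset.range m, l.getD i 0 := by
  rw [list_sum_getD (l.take m)]
  rw [List.length_take, min_eq_left hm]
  apply Finset.sum_congr rfl
  intro i hi
  rw [Finset.mem_range] at hi
  have h1 : i < l.length := lt_of_lt_of_le hi hm
  rw [List.getD_eq_getElem _ _ (by rw [List.length_take]; omega), List.getD_eq_getElem _ _ h1]
  simp [List.getElem_take]

section Bridge
set_option linter.unusedSectionVars false
variable {Ω : Type*} [MeasurableSpace Ω] (P : Measure Ω) [IsProbabilityMeasure P]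
    (ξ : ℕ → Ω → ℤ)

/-- cylinder event -/
def Cyl (n : ℕ) (l : List ℤ) : Set Ω := ⋂ i ∈ Finset.range n, (ξ i)⁻¹' {l.getD i 0}

lemma cyl_measurable (hmeas : ∀ i, Measurable (ξ i)) (n : ℕ) (l : List ℤ) :
    MeasurableSet (Cyl ξ n l) := by
  apply Finset.measurableSet_biInter
  intro i _
  exact (hmeas i) (measurableSet_singleton _)

lemma mem_cyl_iff (n : ℕ) (l : List ℤ) (ω : Ω) :
    ω ∈ Cyl ξ n l ↔ ∀ i, i < n → ξ i ω = l.getD i 0 := by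
  simp [Cyl]

lemma walk_eq_of_cyl (n : ℕ) (l : List ℤ) (hl : l.length = n) (ω : Ω)
    (hω : ∀ i, i < n → ξ i ω = l.getD i 0) (m : ℕ) (hm : m ≤ n) :
    walk ξ m ω = (l.take m).sum := by
  rw [take_sum_getD l m (by omega), walk]
  apply Finset.sum_congr rfl
  intro i hi
  rw [Finset.mem_range] at hi
  exact hω i (by omega)

lemma tau_event_eq (n : ℕ) (hn : 1 ≤ n) :
    {ω | tauMinusOne (fun i => walk ξ i ω) = (n : ℕ∞)}
      = ⋃ (l : ↥(goodSet n)), Cyl ξ n (l : List ℤ) := by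
  ext ω
  simp only [Set.mem_setOf_eq, Set.mem_iUnion]
  constructor
  · intro h
    rw [tau_eq_coe_iff _ n hn] at h
    set l : List ℤ := List.ofFn (fun i : Fin n => ξ i ω) with hldef
    have hlen : l.length = n := by simp [hldef]
    have hget : ∀ i, i < n → l.getD i 0 = ξ i ω := by
      intro i hi
      rw [List.getD_eq_getElem _ _ (by omega)]
      simp [hldef]
    have hcyl : ω ∈ Cyl ξ n l := by
      rw [mem_cyl_iff]; intro i hi; exact (hget i hi).symm
    have hwalk : ∀ m, m ≤ n → walk ξ m ω = (l.take m).sum :=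
      walk_eq_of_cyl ξ n l hlen ω (fun i hi => (hget i hi).symm)
    have hgood : l ∈ goodSet n := by
      refine ⟨hlen, ?_, ?_⟩
      · intro m hm1 hm2
        rw [hlen] at hm2
        rw [← hwalk m (by omega)]
        exact h.2 m hm1 hm2
      · have : l.take n = l := by rw [← hlen]; exact List.take_length
        rw [← this, ← hwalk n le_rfl]
        exact h.1
    exact ⟨⟨l, hgood⟩, hcyl⟩
  · rintro ⟨⟨l, hlen, hpre, hsum⟩, hcyl⟩
    rw [mem_cyl_iff] at hcyl
    have hwalk := walk_eq_of_cyl ξ n l hlen ω hcyl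
    rw [tau_eq_coe_iff _ n hn]
    constructor
    · rw [hwalk n le_rfl, ← hlen, List.take_length]; exact hsum
    · intro m hm1 hm2
      rw [hwalk m (by omega)]
      exact hpre m hm1 (by omega)

lemma cyl_measure (hindep : ProbabilityTheory.iIndepFun ξ P)
    (hlaw : ∀ i, ∀ z : ℤ, P {ω | ξ i ω = z} = animalStepLaw z)
    (n : ℕ) (l : List ℤ) (hl : l.length = n) :
    P (Cyl ξ n l) = W l := by
  rw [Cyl, ProbabilityTheory.iIndepFun.measure_inter_preimage_eq_mul hindep (Finset.range n)
    (fun i _ => measurableSet_singleton _)]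
  rw [W_getD, hl]
  apply Finset.prod_congr rfl
  intro i _
  rw [← hlaw i (l.getD i 0)]
  rfl

lemma cyl_disjoint (n : ℕ) :
    Pairwise (Function.onFun Disjoint (fun l : ↥(goodSet n) => Cyl ξ n (l : List ℤ))) := by
  rintro ⟨l, hl⟩ ⟨l', hl'⟩ hne
  simp only [Function.onFun]
  rw [Set.disjoint_left]
  intro ω h1 h2
  rw [mem_cyl_iff] at h1 h2
  apply hne
  apply Subtype.ext
  have e1 : l.length = n := hl.1
  have e2 : l'.length = n := hl'.1
  apply List.ext_getElem (by rw [e1, e2])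
  intro i hi hi'
  rw [e1] at hi
  rw [← List.getD_eq_getElem l 0 (by omega), ← List.getD_eq_getElem l' 0 (by omega)]
  rw [← h1 i hi, ← h2 i hi]

lemma measure_tau_eq (hmeas : ∀ i, Measurable (ξ i))
    (hindep : ProbabilityTheory.iIndepFun ξ P)
    (hlaw : ∀ i, ∀ z : ℤ, P {ω | ξ i ω = z} = animalStepLaw z)
    (n : ℕ) :
    P {ω | tauMinusOne (fun i => walk ξ i ω) = (n : ℕ∞)} = a n := by
  rcases Nat.eq_zero_or_pos n with rfl | hn
  · have h1 : {ω | tauMinusOne (fun i => walk ξ i ω) = ((0:ℕ) : ℕ∞)} = ∅ := by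
      ext ω; simp only [Set.mem_setOf_eq, Set.mem_empty_iff_false, iff_false]
      exact fun h => tau_never_zero _ (by exact_mod_cast h)
    have h2 : a 0 = 0 := by
      rw [a, ENNReal.tsum_eq_zero]
      intro l
      rw [Set.indicator_apply_eq_zero]
      rintro ⟨hlen, _, hsum⟩
      rw [List.length_eq_zero_iff] at hlen
      subst hlen
      simp at hsum
    rw [h1, h2, measure_empty]
  · rw [tau_event_eq ξ n hn, measure_iUnion (cyl_disjoint ξ n) (fun l => cyl_measurable ξ hmeas n _)]
    rw [a, ← tsum_subtype]
    apply tsum_congr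
    rintro ⟨l, hl⟩
    exact cyl_measure P ξ hindep hlaw n l hl.1

lemma tau_event_measurable (hmeas : ∀ i, Measurable (ξ i)) (n : ℕ) (hn : 1 ≤ n) :
    MeasurableSet {ω | tauMinusOne (fun i => walk ξ i ω) = (n : ℕ∞)} := by
  rw [tau_event_eq ξ n hn]
  exact MeasurableSet.iUnion (fun l => cyl_measurable ξ hmeas n _)

end Bridge

lemma a_zero : a 0 = 0 := by
  rw [a, ENNReal.tsum_eq_zero]
  intro l
  rw [Set.indicator_apply_eq_zero]
  rintro ⟨hlen, _, hsum⟩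
  rw [List.length_eq_zero_iff] at hlen
  subst hlen
  simp at hsum

open scoped ENNReal
attribute [local instance] Classical.propDecidable

/-! ### The Q decomposition -/

def QSet (n : ℕ) : Set (List ℤ) :=
  {t | t.length = n ∧ (∀ i, i < n → -1 ≤ (t.take i).sum) ∧ t.sum < -1}
noncomputable def Q (n : ℕ) : ℝ≥0∞ := ∑' t : List ℤ, (QSet n).indicator W t
def hitSet (n m : ℕ) : Set (List ℤ) :=
  {t | t ∈ QSet n ∧ (t.take m).sum ≤ -1 ∧ ∀ i, 1 ≤ i → i < m → 0 ≤ (t.take i).sum}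

lemma mem_QSet {n : ℕ} {t : List ℤ} :
    t ∈ QSet n ↔ t.length = n ∧ (∀ i, i < n → -1 ≤ (t.take i).sum) ∧ t.sum < -1 := Iff.rfl

/-- Step A: first-step decomposition -/
lemma a_succ_eq_Q (n : ℕ) :
    a (n + 1) = (if n = 0 then (1:ℝ≥0∞)/3 else 0) + 2/3 * Q n := by
  rw [a, tsum_cons_split _ (by
    rw [Set.indicator_apply_eq_zero]; rintro ⟨hlen, _⟩; simp at hlen)]
  rw [ENNReal.tsum_prod']
  rw [tsum_int_split _ ?hvanish]
  case hvanish =>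
    intro z h0 h1
    rw [ENNReal.tsum_eq_zero]
    intro t
    rw [Set.indicator_apply_eq_zero]
    intro _
    rw [W_cons, p_nonneg_ne_one h0 h1, zero_mul]
  have hone : ∑' t : List ℤ, (goodSet (n+1)).indicator W ((1:ℤ) :: t) = 2/3 * Q n := by
    rw [Q, ← ENNReal.tsum_mul_left]
    apply tsum_congr
    intro t
    rcases Classical.em (t ∈ QSet n) with ht | ht
    · obtain ⟨hlen, hpre, hsum⟩ := ht
      rw [Set.indicator_of_mem (mem_QSet.mpr ⟨hlen, hpre, hsum⟩) W]
      have hmem : (1:ℤ) :: t ∈ goodSet (n+1) := by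
        refine mem_goodSet.mpr ⟨by simp [hlen], ?_, ?_⟩
        · intro m hm1 hm2
          obtain ⟨i, rfl⟩ : ∃ i, m = i + 1 := ⟨m - 1, by omega⟩
          rw [List.take_succ_cons, List.sum_cons]
          have hi : i < n := by
            have h2 : i + 1 < t.length + 1 := by simpa using hm2
            omega
          have := hpre i hi
          omega
        · rw [List.sum_cons]; omega
      rw [Set.indicator_of_mem hmem W, W_cons, p_one]
    · rw [Set.indicator_of_notMem ht W, mul_zero]
      rw [Set.indicator_apply_eq_zero]
      rintro ⟨hlen, hpre, hsum⟩
      exfalso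
      apply ht
      refine mem_QSet.mpr ⟨by simpa using hlen, ?_, by rw [List.sum_cons] at hsum; omega⟩
      intro i hi
      have hlt : t.length = n := by simpa using hlen
      have := hpre (i+1) (by omega) (by simp [hlt]; omega)
      rw [List.take_succ_cons, List.sum_cons] at this
      omega
  have hneg : ∀ k : ℕ, ∑' t : List ℤ, (goodSet (n+1)).indicator W ((-1 - (k:ℤ)) :: t)
      = if n = 0 then animalStepLaw (-1 - (k:ℤ)) else 0 := by
    intro k
    rcases Nat.eq_zero_or_pos n with rfl | hn
    · rw [if_pos rfl]
      rw [tsum_eq_single ([] : List ℤ) ?_]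
      · rw [Set.indicator_of_mem (mem_goodSet.mpr ?_) W, W_cons, W_nil, mul_one]
        refine ⟨by simp, ?_, by simp; omega⟩
        intro m hm1 hm2
        simp at hm2
        omega
      · intro t ht
        rw [Set.indicator_apply_eq_zero]
        rintro ⟨hlen, _⟩
        exfalso
        apply ht
        rw [← List.length_eq_zero_iff]
        simpa using hlen
    · rw [if_neg (by omega), ENNReal.tsum_eq_zero]
      intro t
      rw [Set.indicator_apply_eq_zero]
      rintro ⟨hlen, hpre, _⟩
      exfalso
      have := hpre 1 le_rfl (by simp at hlen ⊢; omega)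
      rw [List.take_succ_cons, List.take_zero, List.sum_cons, List.sum_nil] at this
      omega
  rw [hone]
  calc 2/3 * Q n + ∑' (k : ℕ), ∑' (t : List ℤ), (goodSet (n+1)).indicator W ((-1 - (k:ℤ)) :: t)
      = 2/3 * Q n + ∑' (k : ℕ), (if n = 0 then animalStepLaw (-1 - (k:ℤ)) else 0) := by
        congr 1
        exact tsum_congr hneg
    _ = (if n = 0 then (1:ℝ≥0∞)/3 else 0) + 2/3 * Q n := by
        rw [add_comm]
        congr 1
        rcases Nat.eq_zero_or_pos n with rfl | hn
        · simpa using sum_p_neg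
        · have hne : ¬ n = 0 := by omega
          simp [hne]

/-- pointwise partition of the Q indicator according to the first hitting index -/
lemma Q_indicator_partition (n : ℕ) (t : List ℤ) :
    (QSet n).indicator W t = ∑ m ∈ Finset.Icc 1 n, (hitSet n m).indicator W t := by
  rcases Classical.em (t ∈ QSet n) with ht | ht
  · obtain ⟨hlen, hpre, hsum⟩ := ht
    have hn1 : 1 ≤ n := by
      by_contra h
      have : n = 0 := by omega
      subst this
      rw [List.length_eq_zero_iff] at hlen
      subst hlen
      simp at hsum
    have hPn : 1 ≤ n ∧ (t.take n).sum ≤ -1 := by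
      constructor
      · exact hn1
      · rw [← hlen, List.take_length]; omega
    -- least hitting index
    let Pr : ℕ → Prop := fun m => 1 ≤ m ∧ (t.take m).sum ≤ -1
    have hex : ∃ m, Pr m := ⟨n, hPn⟩
    let M := Nat.find hex
    have hM : Pr M := Nat.find_spec hex
    have hMle : M ≤ n := Nat.find_le hPn
    have hMmin : ∀ i, 1 ≤ i → i < M → 0 ≤ (t.take i).sum := by
      intro i hi1 hi2
      have := Nat.find_min hex hi2
      simp only [Pr, not_and, not_le] at this
      have := this hi1
      omega
    have hmem : t ∈ hitSet n M := ⟨⟨hlen, hpre, hsum⟩, hM.2, hMmin⟩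
    rw [Set.indicator_of_mem (mem_QSet.mpr ⟨hlen, hpre, hsum⟩) W]
    rw [Finset.sum_eq_single_of_mem M (Finset.mem_Icc.mpr ⟨hM.1, hMle⟩)]
    · rw [Set.indicator_of_mem hmem W]
    · intro m hm hne
      rw [Finset.mem_Icc] at hm
      rw [Set.indicator_apply_eq_zero]
      rintro ⟨_, hhit, hminm⟩
      exfalso
      rcases Nat.lt_or_ge m M with h | h
      · have := hMmin m hm.1 h
        omega
      · have hlt : M < m := by omega
        have := hminm M hM.1 hlt
        have := hM.2
        omega
  · rw [Set.indicator_of_notMem ht W, Eq.comm, Finset.sum_eq_zero]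
    intro m _
    rw [Set.indicator_apply_eq_zero]
    rintro ⟨htQ, _⟩
    exact absurd htQ ht

/-- the top term m = n -/
lemma hit_top (n : ℕ) (hn : 1 ≤ n) :
    ∑' t : List ℤ, (hitSet n n).indicator W t = D n 0 := by
  have hset : ∀ t : List ℤ, t ∈ hitSet n n ↔ t.length = n ∧ preOK t ∧ t.sum < -1 := by
    intro t
    constructor
    · rintro ⟨⟨hlen, hpre, hsum⟩, _, hmin⟩
      refine ⟨hlen, ?_, hsum⟩
      intro m hm1 hm2
      exact hmin m hm1 (by omega)
    · rintro ⟨hlen, hpre, hsum⟩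
      refine ⟨⟨hlen, ?_, hsum⟩, ?_, ?_⟩
      · intro i hi
        rcases Nat.eq_zero_or_pos i with rfl | hi1
        · simp
        · have := hpre i hi1 (by omega)
          omega
      · rw [← hlen, List.take_length]; omega
      · intro i hi1 hi2
        exact hpre i hi1 (by omega)
  -- partition by the exact landing value
  have hpt : ∀ t : List ℤ, (hitSet n n).indicator W t
      = ∑' k : ℕ, (exactSet n (k+1)).indicator W t := by
    intro t
    rcases Classical.em (t ∈ hitSet n n) with ht | ht
    · obtain ⟨hlen, hpre, hsum⟩ := (hset t).mp ht
      obtain ⟨k, hk⟩ : ∃ k : ℕ, t.sum = -1 - ((k:ℤ) + 1) := ⟨(-2 - t.sum).toNat, by omega⟩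
      rw [Set.indicator_of_mem ht W]
      rw [tsum_eq_single k ?_]
      · rw [Set.indicator_of_mem (mem_exactSet.mpr ⟨hlen, hpre, by push_cast; omega⟩) W]
      · intro k' hk'
        rw [Set.indicator_apply_eq_zero]
        rintro ⟨_, _, hs⟩
        exfalso
        rw [hk] at hs
        have : (k':ℤ) = k := by push_cast at hs; omega
        exact hk' (by exact_mod_cast this)
    · rw [Set.indicator_of_notMem ht W, Eq.comm, ENNReal.tsum_eq_zero]
      intro k
      rw [Set.indicator_apply_eq_zero]
      rintro ⟨hlen, hpre, hs⟩
      exfalso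
      apply ht
      refine (hset t).mpr ⟨hlen, hpre, by push_cast at hs; omega⟩
  calc ∑' t : List ℤ, (hitSet n n).indicator W t
      = ∑' t : List ℤ, ∑' k : ℕ, (exactSet n (k+1)).indicator W t := tsum_congr hpt
    _ = ∑' k : ℕ, D n (k+1) := by rw [ENNReal.tsum_comm]; rfl
    _ = ∑' k : ℕ, (2:ℝ≥0∞)⁻¹ ^ (k+1) * D n 0 := tsum_congr (fun k => D_shift n (k+1))
    _ = D n 0 := by
        rw [ENNReal.tsum_mul_right]
        have h1 : ∑' k : ℕ, (2:ℝ≥0∞)⁻¹ ^ (k+1) = 1 := by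
          calc ∑' k : ℕ, (2:ℝ≥0∞)⁻¹ ^ (k+1) = ∑' k : ℕ, (2:ℝ≥0∞)⁻¹ ^ k * 2⁻¹ := by
                apply tsum_congr; intro k; rw [pow_succ]
            _ = 2 * 2⁻¹ := by rw [ENNReal.tsum_mul_right, tsum_half_pow]
            _ = 1 := by rw [ENNReal.mul_inv_cancel (by norm_num) (by norm_num)]
        rw [h1, one_mul]

/-- the middle terms 1 ≤ m < n -/
lemma hit_mid (n m : ℕ) (hm1 : 1 ≤ m) (hmn : m < n) :
    ∑' t : List ℤ, (hitSet n m).indicator W t = D m 0 * a (n - m) := by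
  rw [tsum_append_split m ((hitSet n m).indicator W)
      (fun p => (exactSet m 0).indicator W p.1 * (goodSet (n-m)).indicator W p.2)
      ?hFG ?hGsupp ?hFsupp]
  · rw [ENNReal.tsum_prod']
    calc ∑' u : List ℤ, ∑' v : List ℤ, (exactSet m 0).indicator W u * (goodSet (n-m)).indicator W v
        = ∑' u : List ℤ, (exactSet m 0).indicator W u * ∑' v : List ℤ, (goodSet (n-m)).indicator W v := by
          apply tsum_congr; intro u; rw [ENNReal.tsum_mul_left]
      _ = D m 0 * a (n - m) := by rw [ENNReal.tsum_mul_right]; rfl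
  case hGsupp =>
    intro u v hG
    dsimp only at hG
    have : (exactSet m 0).indicator W u ≠ 0 := by
      intro h; rw [h, zero_mul] at hG; exact hG rfl
    rcases Classical.em (u ∈ exactSet m 0) with h | h
    · exact h.1
    · rw [Set.indicator_of_notMem h] at this; exact absurd rfl this
  case hFsupp =>
    intro t ht
    rcases Classical.em (t ∈ hitSet n m) with h | h
    · rw [List.length_take, h.1.1]
      omega
    · rw [Set.indicator_of_notMem h] at ht; exact absurd rfl ht
  case hFG =>
    intro u v hu
    dsimp only
    have hiff : (u ++ v) ∈ hitSet n m ↔ (u ∈ exactSet m 0 ∧ v ∈ goodSet (n - m)) := by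
      have htake : ∀ i, i ≤ m → ((u ++ v).take i) = u.take i := by
        intro i hi
        exact List.take_append_of_le_length (by omega)
      have htakeM : (u ++ v).take m = u := by
        rw [htake m le_rfl, ← hu, List.take_length]
      have htake2 : ∀ i', ((u ++ v).take (m + i')).sum = u.sum + (v.take i').sum := by
        intro i'
        rw [List.take_append, List.take_of_length_le (by omega),
          List.sum_append]
        congr 3
        omega
      have hlen : (u ++ v).length = m + v.length := by simp [hu]
      have hsum : (u ++ v).sum = u.sum + v.sum := List.sum_append
      constructor
      · rintro ⟨⟨hl, hq, hs⟩, hhit, hmin⟩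
        rw [htakeM] at hhit
        have husum : u.sum = -1 := by
          have := hq m (by omega)
          rw [htakeM] at this
          omega
        refine ⟨⟨hu, ?_, by omega⟩, ⟨by omega, ?_, ?_⟩⟩
        · intro i hi1 hi2
          have := hmin i hi1 (by omega)
          rwa [htake i (by omega)] at this
        · intro i' hi1 hi2
          have := hq (m + i') (by omega)
          rw [htake2 i'] at this
          omega
        · rw [hsum] at hs
          omega
      · rintro ⟨⟨hul, hupre, husum⟩, ⟨hvl, hvpre, hvsum⟩⟩
        have husum' : u.sum = -1 := by rw [husum]; norm_num
        refine ⟨⟨by omega, ?_, ?_⟩, ?_, ?_⟩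
        · intro i hi
          rcases Nat.lt_or_ge i m with h | h
          · rw [htake i (by omega)]
            rcases Nat.eq_zero_or_pos i with rfl | hi1
            · simp
            · have := hupre i hi1 (by omega)
              omega
          · obtain ⟨i', rfl⟩ : ∃ i', i = m + i' := ⟨i - m, by omega⟩
            rw [htake2 i', husum']
            rcases Nat.eq_zero_or_pos i' with rfl | hi1
            · simp
            · have := hvpre i' hi1 (by omega)
              omega
        · rw [hsum, husum']
          omega
        · rw [htakeM]
          omega
        · intro i hi1 hi2
          rw [htake i (by omega)]
          rcases Nat.eq_zero_or_pos i with rfl | h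
          · simp
          · have := hupre i h (by omega)
            omega
    rcases Classical.em ((u ++ v) ∈ hitSet n m) with h | h
    · rw [Set.indicator_of_mem h W]
      obtain ⟨h1, h2⟩ := hiff.mp h
      rw [Set.indicator_of_mem h1 W, Set.indicator_of_mem h2 W, W_append]
    · rw [Set.indicator_of_notMem h W]
      rcases Classical.em (u ∈ exactSet m 0) with h1 | h1
      · rcases Classical.em (v ∈ goodSet (n-m)) with h2 | h2
        · exact absurd (hiff.mpr ⟨h1, h2⟩) h
        · rw [Set.indicator_of_notMem h2 W, mul_zero]
      · rw [Set.indicator_of_notMem h1 W, zero_mul]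

/-- Step B: the Q value decomposition -/
lemma Q_eq (n : ℕ) :
    Q n = D n 0 + ∑ m ∈ Finset.range (n + 1), D m 0 * a (n - m) := by
  rcases Nat.eq_zero_or_pos n with rfl | hn
  · have h1 : Q 0 = 0 := by
      rw [Q, ENNReal.tsum_eq_zero]
      intro t
      rw [Set.indicator_apply_eq_zero]
      rintro ⟨hlen, _, hsum⟩
      exfalso
      rw [List.length_eq_zero_iff] at hlen
      subst hlen
      simp at hsum
    rw [h1]
    simp [D_zero, a_zero]
  · have hQ : Q n = ∑ m ∈ Finset.Icc 1 n, ∑' t : List ℤ, (hitSet n m).indicator W t := by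
      rw [Q]
      calc ∑' t : List ℤ, (QSet n).indicator W t
          = ∑' t : List ℤ, ∑ m ∈ Finset.Icc 1 n, (hitSet n m).indicator W t :=
            tsum_congr (Q_indicator_partition n)
        _ = ∑ m ∈ Finset.Icc 1 n, ∑' t : List ℤ, (hitSet n m).indicator W t :=
            Summable.tsum_finsetSum (fun i _ => ENNReal.summable)
    obtain ⟨n', rfl⟩ : ∃ n', n = n' + 1 := ⟨n - 1, by omega⟩
    rw [hQ, Finset.sum_Icc_succ_top (by omega)]
    rw [hit_top (n'+1) (by omega)]
    have hmid : ∑ m ∈ Finset.Icc 1 n', ∑' t : List ℤ, (hitSet (n'+1) m).indicator W t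
        = ∑ m ∈ Finset.Icc 1 n', D m 0 * a (n' + 1 - m) := by
      apply Finset.sum_congr rfl
      intro m hm
      rw [Finset.mem_Icc] at hm
      exact hit_mid (n'+1) m hm.1 (by omega)
    rw [hmid, add_comm]
    congr 1
    -- range (n'+2) sum equals Icc 1 n' sum, after dropping the zero endpoint terms
    rw [Finset.sum_range_succ, Finset.sum_range_succ']
    have hz0 : D 0 0 * a (n' + 1 - 0) = 0 := by rw [D_zero, zero_mul]
    have hzt : D (n'+1) 0 * a (n' + 1 - (n'+1)) = 0 := by
      simp [a_zero]
    rw [hz0, hzt, add_zero, add_zero]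
    rw [← Finset.Ico_add_one_right_eq_Icc, Finset.sum_Ico_eq_sum_range]
    apply Finset.sum_congr (by congr 1)
    intro i hi
    congr 2
    · omega
    · omega
lemma D_eq_half_a (m : ℕ) : D m 0 = 2⁻¹ * a m := by
  rw [a_eq_two_D, ← mul_assoc, ENNReal.inv_mul_cancel (by norm_num) (by norm_num), one_mul]

lemma twothirds (x : ℝ≥0∞) : 2/3 * (2⁻¹ * x) = 3⁻¹ * x := by
  rw [div_eq_mul_inv]
  calc 2 * 3⁻¹ * (2⁻¹ * x) = (2 * 2⁻¹) * (3⁻¹ * x) := by ring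
    _ = 3⁻¹ * x := by rw [ENNReal.mul_inv_cancel (by norm_num) (by norm_num), one_mul]

lemma a_succ (n : ℕ) : a (n+1) = (if n = 0 then (3:ℝ≥0∞)⁻¹ else 0) + 3⁻¹ * a n
    + 3⁻¹ * ∑ m ∈ Finset.range (n+1), a m * a (n - m) := by
  rw [a_succ_eq_Q, Q_eq, mul_add]
  have h1 : (2:ℝ≥0∞)/3 * D n 0 = 3⁻¹ * a n := by rw [D_eq_half_a]; exact twothirds _
  have h2 : (2:ℝ≥0∞)/3 * ∑ m ∈ Finset.range (n+1), D m 0 * a (n - m)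
      = 3⁻¹ * ∑ m ∈ Finset.range (n+1), a m * a (n - m) := by
    have h3 : ∑ m ∈ Finset.range (n+1), D m 0 * a (n - m)
        = 2⁻¹ * ∑ m ∈ Finset.range (n+1), a m * a (n - m) := by
      rw [Finset.mul_sum]
      apply Finset.sum_congr rfl
      intro m _
      rw [D_eq_half_a, mul_assoc]
    rw [h3]; exact twothirds _
  rw [h1, h2, one_div, ← add_assoc]



noncomputable def G (σ : ℝ≥0∞) : ℝ≥0∞ := ∑' n : ℕ, σ ^ n * a n

lemma tsum_nat_antidiagonal (h : ℕ → ℕ → ℝ≥0∞) :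
    ∑' p : ℕ × ℕ, h p.1 p.2 = ∑' n : ℕ, ∑ m ∈ Finset.range (n+1), h m (n - m) := by
  have key : ∑' q : (Σ _ : ℕ, ℕ) , (0:ℝ≥0∞) = 0 := by simp
  clear key
  have h1 : ∑' p : ℕ × ℕ, h p.1 p.2
      = ∑' q : (Σ n : ℕ, Fin (n+1)), h q.2.1 (q.1 - q.2.1) := by
    refine (Function.Injective.tsum_eq (g := fun q : (Σ n : ℕ, Fin (n+1)) => ((q.2.1 : ℕ), q.1 - q.2.1)) ?_ ?_).symm
    · rintro ⟨n, m⟩ ⟨n', m'⟩ he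
      simp only [Prod.mk.injEq] at he
      have hm := m.isLt
      have hm' := m'.isLt
      have h1 : (m:ℕ) = m' := he.1
      have hn : n = n' := by omega
      subst hn
      exact congrArg _ (Fin.ext h1)
    · rintro ⟨p1, p2⟩ _
      exact ⟨⟨p1 + p2, ⟨p1, by omega⟩⟩, by simp⟩
  rw [h1, ENNReal.tsum_sigma']
  apply tsum_congr
  intro n
  rw [tsum_fintype]
  exact Fin.sum_univ_eq_sum_range (fun j => h j (n - j)) (n+1)

lemma G_sq (σ : ℝ≥0∞) :
    G σ * G σ = ∑' n : ℕ, σ ^ n * ∑ m ∈ Finset.range (n+1), a m * a (n - m) := by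
  have h1 : G σ * G σ = ∑' p : ℕ × ℕ, (σ ^ p.1 * a p.1) * (σ ^ p.2 * a p.2) := by
    rw [ENNReal.tsum_prod']
    rw [G]
    calc (∑' n, σ ^ n * a n) * (∑' n, σ ^ n * a n)
        = ∑' m, (σ ^ m * a m) * (∑' n, σ ^ n * a n) := ENNReal.tsum_mul_right.symm
      _ = ∑' (m : ℕ), ∑' (k : ℕ), (σ ^ m * a m) * (σ ^ k * a k) := by
          apply tsum_congr; intro m; rw [ENNReal.tsum_mul_left]
  rw [h1, tsum_nat_antidiagonal (fun m k => (σ ^ m * a m) * (σ ^ k * a k))]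
  apply tsum_congr
  intro n
  rw [Finset.mul_sum]
  apply Finset.sum_congr rfl
  intro m hm
  rw [Finset.mem_range] at hm
  have : σ ^ m * σ ^ (n - m) = σ ^ n := by
    rw [← pow_add]
    congr 1
    omega
  calc σ ^ m * a m * (σ ^ (n - m) * a (n - m))
      = (σ ^ m * σ ^ (n - m)) * (a m * a (n - m)) := by ring
    _ = σ ^ n * (a m * a (n - m)) := by rw [this]

lemma tsum_shift (f : ℕ → ℝ≥0∞) (h : f 0 = 0) : ∑' n : ℕ, f n = ∑' n : ℕ, f (n + 1) := by
  refine (Function.Injective.tsum_eq (g := fun n : ℕ => n + 1) (add_left_injective 1) ?_).symm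
  intro n hn
  match n with
  | 0 => exact absurd h hn
  | k + 1 => exact ⟨k, rfl⟩

lemma G_identity (σ : ℝ≥0∞) : 3 * G σ = σ + σ * G σ + σ * (G σ * G σ) := by
  have h0 : 3 * G σ = ∑' n : ℕ, σ ^ (n+1) * (3 * a (n+1)) := by
    rw [G, ← ENNReal.tsum_mul_left]
    rw [tsum_shift (fun n => 3 * (σ ^ n * a n)) (by simp [a_zero])]
    apply tsum_congr; intro n; ring
  have h3a : ∀ n : ℕ, 3 * a (n+1) = (if n = 0 then (1:ℝ≥0∞) else 0) + a n
      + ∑ m ∈ Finset.range (n+1), a m * a (n - m) := by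
    intro n
    rw [a_succ, mul_add, mul_add]
    have h31 : (3:ℝ≥0∞) * 3⁻¹ = 1 := ENNReal.mul_inv_cancel (by norm_num) (by norm_num)
    congr 1
    · congr 1
      · rcases Nat.eq_zero_or_pos n with rfl | hn
        · simp [h31]
        · have : ¬ n = 0 := by omega
          simp [this]
      · rw [← mul_assoc, h31, one_mul]
    · rw [← mul_assoc, h31, one_mul]
  have hsplit : 3 * G σ = (∑' n : ℕ, σ ^ (n+1) * (if n = 0 then (1:ℝ≥0∞) else 0))
      + (∑' n : ℕ, σ ^ (n+1) * a n)
      + ∑' n : ℕ, σ ^ (n+1) * ∑ m ∈ Finset.range (n+1), a m * a (n - m) := by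
    rw [h0]
    calc ∑' n : ℕ, σ ^ (n+1) * (3 * a (n+1))
        = ∑' n : ℕ, (σ ^ (n+1) * (if n = 0 then (1:ℝ≥0∞) else 0)
            + σ ^ (n+1) * a n
            + σ ^ (n+1) * ∑ m ∈ Finset.range (n+1), a m * a (n - m)) := by
          apply tsum_congr
          intro n
          rw [h3a n, mul_add, mul_add]
      _ = _ := by rw [ENNReal.tsum_add, ENNReal.tsum_add]
  rw [hsplit]
  congr 1
  · congr 1
    · rw [tsum_eq_single 0 (by intro n hn; simp [hn])]
      simp
    · rw [G, ← ENNReal.tsum_mul_left]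
      apply tsum_congr
      intro n
      rw [pow_succ]
      ring
  · rw [G_sq, ← ENNReal.tsum_mul_left]
    apply tsum_congr
    intro n
    rw [pow_succ]
    ring

/-! ### analytic part -/


lemma G_le_tsum {σ : ℝ≥0∞} (hσ : σ ≤ 1) : G σ ≤ ∑' n, a n := by
  apply ENNReal.tsum_le_tsum
  intro n
  calc σ ^ n * a n ≤ 1 * a n := mul_le_mul_left (pow_le_one' hσ n) _
    _ = a n := one_mul _

lemma F_formula (hA : ∑' n : ℕ, a n ≤ 1) (s : ℝ) (hs0 : 0 < s) (hs1 : s < 1) :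
    (G (ENNReal.ofReal s)).toReal = (3 - s - Real.sqrt (3 * (1 - s) * (s + 3))) / (2 * s) := by
  set σ := ENNReal.ofReal s with hσdef
  have hσ1 : σ ≤ 1 := by
    rw [hσdef, ← ENNReal.ofReal_one]
    exact ENNReal.ofReal_le_ofReal (by linarith)
  have hσtop : σ ≠ ⊤ := ENNReal.ofReal_ne_top
  have hG1 : G σ ≤ 1 := le_trans (G_le_tsum hσ1) hA
  have hGtop : G σ ≠ ⊤ := ne_top_of_le_ne_top (by norm_num) hG1
  have hF1 : (G σ).toReal ≤ 1 := by
    have := ENNReal.toReal_mono (by norm_num : (1:ℝ≥0∞) ≠ ⊤) hG1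
    simpa using this
  set F := (G σ).toReal with hFdef
  have hF0 : 0 ≤ F := ENNReal.toReal_nonneg
  have hσs : σ.toReal = s := ENNReal.toReal_ofReal hs0.le
  have hmul1 : σ * G σ ≠ ⊤ := ENNReal.mul_ne_top hσtop hGtop
  have hmul2 : σ * (G σ * G σ) ≠ ⊤ := ENNReal.mul_ne_top hσtop (ENNReal.mul_ne_top hGtop hGtop)
  have hreal : 3 * F = s + s * F + s * (F * F) := by
    have h := congrArg ENNReal.toReal (G_identity σ)
    rw [ENNReal.toReal_mul,
      ENNReal.toReal_add (ENNReal.add_ne_top.mpr ⟨hσtop, hmul1⟩) hmul2,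
      ENNReal.toReal_add hσtop hmul1,
      ENNReal.toReal_mul, ENNReal.toReal_mul, ENNReal.toReal_mul, hσs] at h
    rw [show ((3:ℝ≥0∞)).toReal = 3 by norm_num] at h
    exact h
  have hquad : s * F^2 - (3 - s) * F + s = 0 := by nlinarith [hreal]
  have hsq : (3 - s - 2*s*F)^2 = 3 * (1 - s) * (s + 3) := by linear_combination (4*s) * hquad
  have hpos : 0 ≤ 3 - s - 2*s*F := by nlinarith
  have hsqrt : Real.sqrt (3 * (1 - s) * (s + 3)) = 3 - s - 2*s*F := by
    rw [← hsq, Real.sqrt_sq hpos]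
  rw [hsqrt]
  field_simp
  ring

lemma tsum_real_eq (hA : ∑' n : ℕ, a n ≤ 1) (s : ℝ) (hs0 : 0 ≤ s) :
    ∑' n : ℕ, s ^ n * (a n).toReal = (G (ENNReal.ofReal s)).toReal := by
  have han : ∀ n, a n ≠ ⊤ := fun n =>
    ne_top_of_le_ne_top (by norm_num) (le_trans (ENNReal.le_tsum n) hA)
  rw [G, ENNReal.tsum_toReal_eq (fun n =>
    ENNReal.mul_ne_top (ENNReal.pow_ne_top ENNReal.ofReal_ne_top) (han n))]
  apply tsum_congr
  intro n
  rw [ENNReal.toReal_mul, ENNReal.toReal_pow, ENNReal.toReal_ofReal hs0]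


end AnimalProof

/-- generating function of τ_{-1}. The first descending ladder
time τ_{-1} of the animal walk is almost surely finite, and for every 0 < s < 1,
E[s^{τ_{-1}}] = (3 − s − √(3(1−s)(s+3))) / (2s). -/
theorem ladder_time_generating_function
    {Ω : Type*} [MeasurableSpace Ω] (P : Measure Ω) [IsProbabilityMeasure P]
    (ξ : ℕ → Ω → ℤ) (hmeas : ∀ i, Measurable (ξ i))
    (hindep : ProbabilityTheory.iIndepFun ξ P)
    (hlaw : ∀ i, ∀ z : ℤ, P {ω | ξ i ω = z} = animalStepLaw z)
    (s : ℝ) (hs0 : 0 < s) (hs1 : s < 1) :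
    P {ω | tauMinusOne (fun i => walk ξ i ω) = ⊤} = 0 ∧
    ∑' n : ℕ, s ^ n * (P {ω | tauMinusOne (fun i => walk ξ i ω) = (n : ℕ∞)}).toReal =
      (3 - s - Real.sqrt (3 * (1 - s) * (s + 3))) / (2 * s) := by
  classical
  have hPa : ∀ n : ℕ, P {ω | tauMinusOne (fun i => walk ξ i ω) = (n : ℕ∞)} = AnimalProof.a n :=
    fun n => AnimalProof.measure_tau_eq P ξ hmeas hindep hlaw n
  have hE0 : {ω | tauMinusOne (fun i => walk ξ i ω) = ((0:ℕ) : ℕ∞)} = ∅ := by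
    ext ω
    simp only [Set.mem_setOf_eq, Set.mem_empty_iff_false, iff_false]
    intro h
    exact AnimalProof.tau_never_zero _ (by exact_mod_cast h)
  have hEmeas : ∀ n : ℕ, MeasurableSet {ω | tauMinusOne (fun i => walk ξ i ω) = (n : ℕ∞)} := by
    intro n
    rcases Nat.eq_zero_or_pos n with rfl | hn
    · rw [hE0]; exact MeasurableSet.empty
    · exact AnimalProof.tau_event_measurable ξ hmeas n hn
  have hdisj : Pairwise (Function.onFun Disjoint
      (fun n : ℕ => {ω | tauMinusOne (fun i => walk ξ i ω) = (n : ℕ∞)})) := by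
    intro n n' hne
    simp only [Function.onFun]
    rw [Set.disjoint_left]
    intro ω h1 h2
    simp only [Set.mem_setOf_eq] at h1 h2
    rw [h1] at h2
    exact hne (by exact_mod_cast h2)
  have hPU : P (⋃ n : ℕ, {ω | tauMinusOne (fun i => walk ξ i ω) = (n : ℕ∞)})
      = ∑' n : ℕ, AnimalProof.a n := by
    rw [measure_iUnion hdisj hEmeas]
    exact tsum_congr hPa
  have hA : ∑' n : ℕ, AnimalProof.a n ≤ 1 := by
    rw [← hPU]; exact prob_le_one
  have hAtop : ∑' n : ℕ, AnimalProof.a n ≠ ⊤ := ne_top_of_le_ne_top (by norm_num) hA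
  refine ⟨?_, ?_⟩
  · -- part 1
    have hbound : ∀ s' : ℝ, 0 < s' → s' < 1 →
        (3 - s' - Real.sqrt (3 * (1 - s') * (s' + 3))) / (2 * s')
          ≤ (∑' n : ℕ, AnimalProof.a n).toReal := by
      intro s' h0 h1
      rw [← AnimalProof.F_formula hA s' h0 h1]
      apply ENNReal.toReal_mono hAtop
      apply AnimalProof.G_le_tsum
      rw [← ENNReal.ofReal_one]
      exact ENNReal.ofReal_le_ofReal (by linarith)
    have hsk : Filter.Tendsto (fun k : ℕ => 1 - ((k:ℝ)+2)⁻¹) Filter.atTop (nhds 1) := by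
      have h2 : Filter.Tendsto (fun k : ℕ => ((k:ℝ) + 2)) Filter.atTop Filter.atTop :=
        Filter.tendsto_atTop_add_const_right _ 2 tendsto_natCast_atTop_atTop
      have h3 := h2.inv_tendsto_atTop
      have h4 := Filter.Tendsto.const_sub (1:ℝ) h3
      simpa using h4
    have hc1 : ContinuousAt (fun x : ℝ => 3 - x - Real.sqrt (3 * (1 - x) * (x + 3))) 1 := by
      fun_prop
    have hc2 : ContinuousAt (fun x : ℝ => 2 * x) 1 := by fun_prop
    have hcont := ContinuousAt.div hc1 hc2 (by norm_num)
    have hval : (3 - (1:ℝ) - Real.sqrt (3 * (1 - 1) * (1 + 3))) / (2 * 1) = 1 := by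
      have hz : 3 * (1 - (1:ℝ)) * (1 + 3) = 0 := by ring
      rw [hz, Real.sqrt_zero]
      norm_num
    have htend : Filter.Tendsto
        (fun k : ℕ => (3 - (1 - ((k:ℝ)+2)⁻¹) - Real.sqrt (3 * (1 - (1 - ((k:ℝ)+2)⁻¹)) * ((1 - ((k:ℝ)+2)⁻¹) + 3))) / (2 * (1 - ((k:ℝ)+2)⁻¹)))
        Filter.atTop (nhds 1) := by
      have h := hcont.tendsto.comp hsk
      simp only [Function.comp_def, Pi.div_apply] at h
      rw [hval] at h
      exact h
    have hsk_pos : ∀ k : ℕ, 0 < 1 - ((k:ℝ)+2)⁻¹ := by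
      intro k
      have h1 : ((k:ℝ)+2)⁻¹ ≤ 2⁻¹ := by
        apply inv_anti₀ <;> [norm_num; · push_cast; linarith [Nat.cast_nonneg (α := ℝ) k]]
      linarith
    have hsk_lt : ∀ k : ℕ, 1 - ((k:ℝ)+2)⁻¹ < 1 := by
      intro k
      have : 0 < ((k:ℝ)+2)⁻¹ := by positivity
      linarith
    have h1le : (1:ℝ) ≤ (∑' n : ℕ, AnimalProof.a n).toReal := by
      apply le_of_tendsto' htend
      intro k
      exact hbound _ (hsk_pos k) (hsk_lt k)
    have hAeq : ∑' n : ℕ, AnimalProof.a n = 1 := by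
      refine le_antisymm hA ?_
      calc (1:ℝ≥0∞) = ENNReal.ofReal 1 := ENNReal.ofReal_one.symm
        _ ≤ ENNReal.ofReal ((∑' n : ℕ, AnimalProof.a n).toReal) := ENNReal.ofReal_le_ofReal h1le
        _ = ∑' n : ℕ, AnimalProof.a n := ENNReal.ofReal_toReal hAtop
    have hset : {ω | tauMinusOne (fun i => walk ξ i ω) = ⊤}
        = (⋃ n : ℕ, {ω | tauMinusOne (fun i => walk ξ i ω) = (n : ℕ∞)})ᶜ := by
      ext ω
      simp only [Set.mem_setOf_eq, Set.mem_compl_iff, Set.mem_iUnion]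
      constructor
      · rintro h ⟨n, hn⟩
        rw [h] at hn
        exact (by simp : ((⊤:ℕ∞) ≠ (n:ℕ∞))) hn
      · intro h
        by_contra hne
        obtain ⟨k, hk⟩ := WithTop.ne_top_iff_exists.mp hne
        exact h ⟨k, hk.symm⟩
    rw [hset, measure_compl (MeasurableSet.iUnion hEmeas) (measure_ne_top P _), hPU, hAeq,
      measure_univ, tsub_self]
  · -- part 2
    have hcg : ∀ n : ℕ, s ^ n * (P {ω | tauMinusOne (fun i => walk ξ i ω) = (n : ℕ∞)}).toReal
        = s ^ n * (AnimalProof.a n).toReal := by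
      intro n; rw [hPa]
    rw [tsum_congr hcg, AnimalProof.tsum_real_eq hA s hs0.le]
    exact AnimalProof.F_formula hA s hs0 hs1
end

section
/- Let m, x be integers with m ≤ x ≤ 0 and let (Š_n) be the shaved walk started from (m,x). For every integer N with −N < m, letting τ_{−N} := inf{ n ≥ 0 : Š_n = −N } and τ_1 := inf{ n ≥ 0 : Š_n = 1 }, one has P( τ_{−N} < τ_1 ) = (|x|+1)(|m|+2) / ((N+1)(N+2)). -/
open MeasureTheory

/-- The shaved walk started from (m,x) (with m ≤ x ≤ 0), driven by the increments ξ,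
together with its running minimum: `shavedFrom ξ m x n = (Š n, M n)` where
Š 0 = x, M n = min(m, Š 0, …, Š n), and
Š_{n+1} = Š_n + ξ_{n+1} if Š_n + ξ_{n+1} ≥ M_n, and Š_{n+1} = M_n − 1 otherwise.
(Here `ξ n` plays the role of the increment ξ_{n+1}.) -/
def shavedFrom (ξ : ℕ → ℤ) (m x : ℤ) : ℕ → ℤ × ℤ
  | 0 => (x, min m x)
  | n+1 =>
    let p := shavedFrom ξ m x n
    let v := if p.2 ≤ p.1 + ξ n then p.1 + ξ n else p.2 - 1
    (v, min p.2 v)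

namespace ShavedProof

/-! ### basic ENNReal constants -/

lemma two_thirds_add_third : (2/3 : ENNReal) + 3⁻¹ = 1 := by
  rw [div_eq_mul_inv]
  have h : (2 : ENNReal) * 3⁻¹ + 3⁻¹ = 3 * 3⁻¹ := by ring
  rw [h, ENNReal.mul_inv_cancel (by norm_num) (by norm_num)]

lemma one_sub_two_thirds : (1 : ENNReal) - 2/3 = 3⁻¹ :=
  ENNReal.sub_eq_of_eq_add (by
    simp only [ne_eq, ENNReal.div_eq_top]
    norm_num) (by rw [add_comm, two_thirds_add_third])

lemma two_thirds_le_one : (2/3 : ENNReal) ≤ 1 := by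
  calc (2/3 : ENNReal) ≤ 2/3 + 3⁻¹ := le_self_add
  _ = 1 := two_thirds_add_third

lemma half_sum : ∑' k : ℕ, (2⁻¹ : ENNReal) ^ (k+1) = 1 := by
  have h : ∀ k : ℕ, (2⁻¹ : ENNReal) ^ (k+1) = (2⁻¹:ENNReal)^k * 2⁻¹ := fun k => pow_succ _ _
  simp_rw [h]
  rw [ENNReal.tsum_mul_right, ENNReal.tsum_geometric]
  have h1 : (1 : ENNReal) - 2⁻¹ = 2⁻¹ := by
    refine ENNReal.sub_eq_of_eq_add (by norm_num) ?_
    rw [← two_mul, ENNReal.mul_inv_cancel (by norm_num) (by norm_num)]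
  rw [h1, inv_inv, ← ENNReal.mul_inv_cancel (a := 2) (by norm_num) (by norm_num)]

/-! ### the step law -/

lemma mu_one : animalStepLaw 1 = 2/3 := by simp [animalStepLaw]

lemma mu_neg (k : ℕ) : animalStepLaw (-((k:ℤ)+1)) = (2⁻¹:ENNReal)^(k+1) * 3⁻¹ := by
  have h1 : (-((k:ℤ)+1)) ≠ 1 := by omega
  have h2 : (-((k:ℤ)+1)) < 0 := by omega
  simp only [animalStepLaw, if_neg h1, if_pos h2]
  have h3 : (-((k:ℤ)+1)) = Int.negSucc k := by
    rw [Int.negSucc_eq]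
  rw [h3]
  rw [zpow_negSucc, div_eq_mul_inv, ← ENNReal.inv_pow]

lemma mu_vanish (z : ℤ) (h : ¬ (z = 1 ∨ z < 0)) : animalStepLaw z = 0 := by
  push_neg at h
  simp only [animalStepLaw, if_neg h.1, if_neg (not_lt.mpr h.2)]

lemma mu_support {z : ℤ} (h : animalStepLaw z ≠ 0) : z = 1 ∨ z < 0 := by
  by_contra hc; exact h (mu_vanish z hc)

/-- reindex a sum over ℤ whose summand is supported on `{1} ∪ {z < 0}` -/
lemma mu_reindex (F : ℤ → ENNReal) (hF : ∀ z, ¬ (z = 1 ∨ z < 0) → F z = 0) :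
    ∑' z : ℤ, F z = F 1 + ∑' k : ℕ, F (-((k:ℤ)+1)) := by
  set e : ℕ → ℤ := fun k => if k = 0 then (1:ℤ) else -(k:ℤ) with he
  have hinj : Function.Injective e := by
    intro a b hab
    simp only [he] at hab
    split_ifs at hab <;> omega
  have hsupp : Function.support F ⊆ Set.range e := by
    intro z hz
    rcases not_imp_comm.mp (hF z) hz with h | h
    · exact ⟨0, by simp [he, h]⟩
    · refine ⟨(-z).toNat, ?_⟩
      simp only [he]
      rw [if_neg (by omega)]
      omega
  rw [← hinj.tsum_eq hsupp, tsum_eq_zero_add' ENNReal.summable]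
  have h0 : e 0 = 1 := by simp [he]
  have hsucc : ∀ k : ℕ, e (k+1) = -((k:ℤ)+1) := fun k => by
    simp only [he, if_neg (Nat.succ_ne_zero k)]
    omega
  rw [h0]
  exact congrArg (F 1 + ·) (tsum_congr fun k => by rw [hsucc k])

lemma mu_weighted (F : ℤ → ENNReal) :
    ∑' z : ℤ, animalStepLaw z * F z
      = 2/3 * F 1 + ∑' k : ℕ, (2⁻¹:ENNReal)^(k+1) * 3⁻¹ * F (-((k:ℤ)+1)) := by
  rw [mu_reindex (fun z => animalStepLaw z * F z)
      (fun z hz => by show animalStepLaw z * F z = 0; rw [mu_vanish z hz, zero_mul]), mu_one]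
  congr 1
  exact tsum_congr fun k => by rw [mu_neg]

lemma mu_total : ∑' z : ℤ, animalStepLaw z = 1 := by
  have := mu_weighted (fun _ => 1)
  simp only [mul_one] at this
  rw [this]
  simp_rw [mul_comm ((2⁻¹:ENNReal)^(_+1)) 3⁻¹]
  rw [ENNReal.tsum_mul_left, half_sum, mul_one, two_thirds_add_third]

lemma mu_offone_total : ∑' z : ℤ, (if z = 1 then 0 else animalStepLaw z) = 3⁻¹ := by
  rw [mu_reindex _ (fun z hz => by
    rw [if_neg (by push_neg at hz ⊢; exact hz.1), mu_vanish z hz])]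
  rw [if_pos rfl, zero_add]
  have hco : ∀ k : ℕ, (if (-((k:ℤ)+1)) = 1 then 0 else animalStepLaw (-((k:ℤ)+1)))
      = (2⁻¹:ENNReal)^(k+1) * 3⁻¹ := fun k => by
    rw [if_neg (by omega), mu_neg]
  simp_rw [hco, mul_comm ((2⁻¹:ENNReal)^(_+1)) 3⁻¹]
  rw [ENNReal.tsum_mul_left, half_sum, mul_one]

/-! ### key summation identity -/

lemma key_sum : ∀ (d a : ℕ),
    (∑' k : ℕ, (2⁻¹ : ENNReal)^(k+1) *
      (if k < d then ((a:ENNReal) + k + 2) else ((a:ENNReal) + d + 3)))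
    = (a:ENNReal) + 3 := by
  intro d
  induction d with
  | zero =>
    intro a
    simp only [Nat.not_lt_zero, if_false, Nat.cast_zero, add_zero]
    rw [ENNReal.tsum_mul_right, half_sum, one_mul]
  | succ d ih =>
    intro a
    rw [tsum_eq_zero_add' ENNReal.summable]
    have h0 : (2⁻¹:ENNReal)^(0+1) *
        (if 0 < d+1 then ((a:ENNReal) + (0:ℕ) + 2) else ((a:ENNReal) + (d+1:ℕ) + 3))
        = 2⁻¹ * ((a:ENNReal) + 2) := by
      rw [if_pos (Nat.succ_pos d)]
      norm_num
    rw [h0]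
    have htail : ∀ k : ℕ, (2⁻¹:ENNReal)^(k+1+1) *
        (if k+1 < d+1 then ((a:ENNReal) + (k+1:ℕ) + 2) else ((a:ENNReal) + (d+1:ℕ) + 3))
        = 2⁻¹ * ((2⁻¹:ENNReal)^(k+1) *
          (if k < d then (((a+1:ℕ):ENNReal) + k + 2) else (((a+1:ℕ):ENNReal) + d + 3))) := by
      intro k
      have hiff : (k+1 < d+1) ↔ (k < d) := by omega
      rw [if_congr hiff rfl rfl]
      have hpow : (2⁻¹:ENNReal)^(k+1+1) = 2⁻¹ * (2⁻¹:ENNReal)^(k+1) := by ring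
      rw [hpow, mul_assoc]
      congr 2
      split_ifs <;> push_cast <;> ring
    simp_rw [htail]
    rw [ENNReal.tsum_mul_left, ih (a+1)]
    push_cast
    have : (2⁻¹:ENNReal) * ((a:ENNReal)+2) + 2⁻¹ * ((a:ENNReal) + 1 + 3)
        = 2⁻¹ * (2 * ((a:ENNReal) + 3)) := by ring
    rw [this, ← mul_assoc, ENNReal.inv_mul_cancel (by norm_num) (by norm_num), one_mul]



/-! ### the deterministic walk -/

def stepD (z : ℤ) (p : ℤ × ℤ) : ℤ × ℤ :=
  let v := if p.2 ≤ p.1 + z then p.1 + z else p.2 - 1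
  (v, min p.2 v)

def walk (g : ℕ → ℤ) (p : ℤ × ℤ) : ℕ → ℤ × ℤ
  | 0 => p
  | n + 1 => stepD (g n) (walk g p n)

lemma stepD_eq (z : ℤ) (p : ℤ × ℤ) :
    stepD z p = if p.2 ≤ p.1 + z then (p.1 + z, min p.2 (p.1 + z))
      else (p.2 - 1, min p.2 (p.2 - 1)) := by
  simp only [stepD]
  split_ifs <;> rfl

lemma walk_congr (g g' : ℕ → ℤ) (p : ℤ × ℤ) :
    ∀ k : ℕ, (∀ i < k, g i = g' i) → walk g p k = walk g' p k := by
  intro k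
  induction k with
  | zero => intro _; rfl
  | succ k ih =>
    intro h
    show stepD (g k) (walk g p k) = stepD (g' k) (walk g' p k)
    rw [h k (by omega), ih (fun i hi => h i (by omega))]

lemma walk_shift (g : ℕ → ℤ) (p : ℤ × ℤ) :
    ∀ k : ℕ, walk g p (k+1) = walk (fun i => g (i+1)) (stepD (g 0) p) k := by
  intro k
  induction k with
  | zero => rfl
  | succ k ih =>
    show stepD (g (k+1)) (walk g p (k+1)) = _
    rw [ih]
    rfl

section WithN

variable (N : ℕ)

/-- hit `-N` within `n` steps, strictly before hitting `1` -/
def hitN (n : ℕ) (p : ℤ × ℤ) (g : ℕ → ℤ) : Prop :=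
  ∃ k ≤ n, (walk g p k).1 = -(N:ℤ) ∧ ∀ j ≤ k, (walk g p j).1 ≠ 1

lemma hit_of_top {p : ℤ × ℤ} (h : p.1 = -(N:ℤ)) (n : ℕ) (g : ℕ → ℤ) : hitN N n p g :=
  ⟨0, Nat.zero_le _, h, fun j hj => by
    interval_cases j
    show p.1 ≠ 1
    omega⟩

lemma not_hit_of_one {p : ℤ × ℤ} (h : p.1 = 1) (n : ℕ) (g : ℕ → ℤ) : ¬ hitN N n p g := by
  rintro ⟨k, _, _, h2⟩
  exact h2 0 (Nat.zero_le _) h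

lemma hit_zero (p : ℤ × ℤ) (g : ℕ → ℤ) : hitN N 0 p g ↔ p.1 = -(N:ℤ) := by
  constructor
  · rintro ⟨k, hk, h1, _⟩
    interval_cases k
    exact h1
  · intro h; exact hit_of_top N h 0 g

lemma hit_mono {n n' : ℕ} (h : n ≤ n') {p : ℤ × ℤ} {g : ℕ → ℤ} :
    hitN N n p g → hitN N n' p g := by
  rintro ⟨k, hk, h1, h2⟩
  exact ⟨k, hk.trans h, h1, h2⟩

lemma hit_congr {n : ℕ} {p : ℤ × ℤ} {g g' : ℕ → ℤ} (h : ∀ i < n, g i = g' i) :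
    hitN N n p g ↔ hitN N n p g' := by
  have key : ∀ k ≤ n, walk g p k = walk g' p k :=
    fun k hk => walk_congr g g' p k (fun i hi => h i (by omega))
  constructor
  · rintro ⟨k, hk, h1, h2⟩
    exact ⟨k, hk, (key k hk) ▸ h1, fun j hj => (key j (hj.trans hk)) ▸ h2 j hj⟩
  · rintro ⟨k, hk, h1, h2⟩
    exact ⟨k, hk, (key k hk).symm ▸ h1, fun j hj => (key j (hj.trans hk)).symm ▸ h2 j hj⟩

lemma hit_succ {n : ℕ} {p : ℤ × ℤ} {g : ℕ → ℤ} (h1 : p.1 ≠ -(N:ℤ)) (h2 : p.1 ≠ 1) :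
    hitN N (n+1) p g ↔ hitN N n (stepD (g 0) p) (fun i => g (i+1)) := by
  constructor
  · rintro ⟨k, hk, hk1, hk2⟩
    rcases k with _ | k
    · exact absurd hk1 h1
    · refine ⟨k, by omega, ?_, ?_⟩
      · rw [← walk_shift]; exact hk1
      · intro j hj
        rw [← walk_shift]
        exact hk2 (j+1) (by omega)
  · rintro ⟨k, hk, hk1, hk2⟩
    refine ⟨k+1, by omega, ?_, ?_⟩
    · rw [walk_shift]; exact hk1
    · intro j hj
      rcases j with _ | j
      · exact h2
      · rw [walk_shift]
        exact hk2 j (by omega)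

/-! ### state space -/

def interiorP (p : ℤ × ℤ) : Prop := -(N:ℤ) < p.2 ∧ p.2 ≤ p.1 ∧ p.1 ≤ 0

def SsetP (p : ℤ × ℤ) : Prop :=
  (-(N:ℤ) < p.2 ∧ p.2 ≤ p.1 ∧ p.1 ≤ 1) ∨ p = (-(N:ℤ), -(N:ℤ))

lemma step_mem {p : ℤ × ℤ} (hp : interiorP N p) {z : ℤ} (hz : z = 1 ∨ z < 0) :
    SsetP N (stepD z p) := by
  obtain ⟨hp1, hp2, hp3⟩ := hp
  rw [stepD_eq]
  split_ifs with h
  · left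
    refine ⟨?_, ?_, ?_⟩
    · simp only
      omega
    · simp only
      omega
    · simp only
      omega
  · have hv : min p.2 (p.2 - 1) = p.2 - 1 := by omega
    rw [hv]
    rcases eq_or_lt_of_le (by omega : -(N:ℤ) ≤ p.2 - 1) with he | hlt
    · right
      simp only [Prod.mk.injEq]
      omega
    · left
      refine ⟨by simpa using hlt, le_refl _, by simp only; omega⟩

lemma interior_of (p : ℤ × ℤ) (hS : SsetP N p) (hne1 : p.1 ≠ 1) (hneN : p.1 ≠ -(N:ℤ)) :
    interiorP N p := by
  rcases hS with ⟨h1, h2, h3⟩ | h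
  · exact ⟨h1, h2, by omega⟩
  · rw [h] at hneN
    simp at hneN

/-! ### the harmonic function -/

noncomputable def hval (p : ℤ × ℤ) : ENNReal :=
  (((1 - p.1).toNat : ENNReal)) * (((2 - p.2).toNat : ENNReal))

lemma harmonic {p : ℤ × ℤ} (hp : interiorP N p) :
    ∑' z : ℤ, animalStepLaw z * hval (stepD z p) = hval p := by
  obtain ⟨hp1, hp2, hp3⟩ := hp
  obtain ⟨a, ha⟩ : ∃ a : ℕ, p.1 = -(a:ℤ) := ⟨(-p.1).toNat, by omega⟩
  obtain ⟨d, hd⟩ : ∃ d : ℕ, p.2 = p.1 - (d:ℤ) := ⟨(p.1 - p.2).toNat, by omega⟩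
  rw [mu_weighted]
  -- the up-step
  have hstep1 : stepD 1 p = (p.1 + 1, p.2) := by
    rw [stepD_eq, if_pos (by omega)]
    rw [min_eq_left (by omega)]
  have hup : hval (stepD 1 p) = (a : ENNReal) * ((a:ENNReal) + d + 2) := by
    rw [hstep1]
    simp only [hval]
    have e1 : (1 - (p.1 + 1)).toNat = a := by omega
    have e2 : (2 - p.2).toNat = a + d + 2 := by omega
    rw [e1, e2]
    push_cast
    ring
  -- the down-steps
  have hdown : ∀ k : ℕ, hval (stepD (-((k:ℤ)+1)) p)
      = (if k < d then ((a:ENNReal) + k + 2) else ((a:ENNReal) + d + 3)) * ((a:ENNReal) + d + 2) := by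
    intro k
    rw [stepD_eq]
    split_ifs with h h2 h2
    · -- stay above the minimum
      simp only [hval]
      rw [min_eq_left (by omega)]
      have e1 : (1 - (p.1 + -((k:ℤ)+1))).toNat = a + k + 2 := by omega
      have e2 : (2 - p.2).toNat = a + d + 2 := by omega
      rw [e1, e2]
      push_cast
      ring
    · exfalso; omega
    · exfalso; omega
    · -- shaved
      simp only [hval]
      rw [min_eq_right (by omega)]
      have e1 : (1 - (p.2 - 1)).toNat = a + d + 2 := by omega
      have e2 : (2 - (p.2 - 1)).toNat = a + d + 3 := by omega
      rw [e1, e2]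
      push_cast
      ring
  rw [hup]
  have hsum : ∑' k : ℕ, (2⁻¹:ENNReal)^(k+1) * 3⁻¹ * hval (stepD (-((k:ℤ)+1)) p)
      = 3⁻¹ * (((a:ENNReal) + 3) * ((a:ENNReal) + d + 2)) := by
    have hco : ∀ k : ℕ, (2⁻¹:ENNReal)^(k+1) * 3⁻¹ * hval (stepD (-((k:ℤ)+1)) p)
        = 3⁻¹ * (((2⁻¹:ENNReal)^(k+1) *
            (if k < d then ((a:ENNReal) + k + 2) else ((a:ENNReal) + d + 3))) * ((a:ENNReal) + d + 2)) := by
      intro k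
      rw [hdown k]
      ring
    simp_rw [hco]
    rw [ENNReal.tsum_mul_left, ENNReal.tsum_mul_right, key_sum d a]
  rw [hsum]
  have hvp : hval p = ((a:ENNReal) + 1) * ((a:ENNReal) + d + 2) := by
    simp only [hval]
    have e1 : (1 - p.1).toNat = a + 1 := by omega
    have e2 : (2 - p.2).toNat = a + d + 2 := by omega
    rw [e1, e2]
    push_cast
    ring
  rw [hvp, div_eq_mul_inv]
  have h3 : (3:ENNReal)⁻¹ * 3 = 1 := ENNReal.inv_mul_cancel (by norm_num) (by norm_num)
  calc (2:ENNReal) * 3⁻¹ * ((a:ENNReal) * ((a:ENNReal) + d + 2))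
        + 3⁻¹ * (((a:ENNReal) + 3) * ((a:ENNReal) + d + 2))
      = 3⁻¹ * 3 * (((a:ENNReal) + 1) * ((a:ENNReal) + d + 2)) := by ring
    _ = ((a:ENNReal) + 1) * ((a:ENNReal) + d + 2) := by rw [h3, one_mul]


/-! ### the n-step hitting probability -/

def extSeq {n : ℕ} (v : Fin n → ℤ) : ℕ → ℤ := fun i => if h : i < n then v ⟨i, h⟩ else 0

lemma extSeq_lt {n : ℕ} (v : Fin n → ℤ) {i : ℕ} (hi : i < n) : extSeq v i = v ⟨i, hi⟩ := by
  simp only [extSeq]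
  rw [dif_pos hi]

open Classical in
noncomputable def Q (n : ℕ) (p : ℤ × ℤ) : ENNReal :=
  ∑' v : Fin n → ℤ, if hitN N n p (extSeq v) then ∏ i, animalStepLaw (v i) else 0

end WithN

lemma tsum_fin_succ (n : ℕ) (G : (Fin (n+1) → ℤ) → ENNReal) :
    ∑' v : Fin (n+1) → ℤ, G v = ∑' z : ℤ, ∑' w : Fin n → ℤ, G (Fin.cons z w) := by
  rw [← (Fin.consEquiv (fun _ : Fin (n+1) => ℤ)).tsum_eq G, ENNReal.tsum_prod']
  rfl

lemma mu_prod_total : ∀ n : ℕ, ∑' v : Fin n → ℤ, ∏ i, animalStepLaw (v i) = 1 := by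
  intro n
  induction n with
  | zero =>
    rw [tsum_eq_single (fun i : Fin 0 => i.elim0)
      (fun b hb => absurd (Subsingleton.elim b _) hb)]
    simp
  | succ n ih =>
    rw [tsum_fin_succ]
    have h : ∀ (z : ℤ) (w : Fin n → ℤ),
        ∏ i, animalStepLaw ((Fin.cons z w : Fin (n+1) → ℤ) i)
          = animalStepLaw z * ∏ i, animalStepLaw (w i) := by
      intro z w
      rw [Fin.prod_univ_succ]
      simp only [Fin.cons_zero, Fin.cons_succ]
    simp_rw [h, ENNReal.tsum_mul_left, ih, mul_one, mu_total]

section WithN2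

variable (N : ℕ)

open Classical in
lemma Q_top {p : ℤ × ℤ} (h : p.1 = -(N:ℤ)) (n : ℕ) : Q N n p = 1 := by
  have hco : ∀ v : Fin n → ℤ,
      (if hitN N n p (extSeq v) then ∏ i, animalStepLaw (v i) else 0)
        = ∏ i, animalStepLaw (v i) := fun v => if_pos (hit_of_top N h n _)
  simp only [Q]
  simp_rw [hco]
  exact mu_prod_total n

open Classical in
lemma Q_one {p : ℤ × ℤ} (h : p.1 = 1) (n : ℕ) : Q N n p = 0 := by
  have hco : ∀ v : Fin n → ℤ,
      (if hitN N n p (extSeq v) then ∏ i, animalStepLaw (v i) else 0) = 0 :=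
    fun v => if_neg (not_hit_of_one N h n _)
  simp only [Q]
  simp_rw [hco]
  exact tsum_zero

open Classical in
lemma Q_zero (p : ℤ × ℤ) : Q N 0 p = if p.1 = -(N:ℤ) then 1 else 0 := by
  simp only [Q]
  rw [tsum_eq_single (fun i : Fin 0 => i.elim0)
    (fun b hb => absurd (Subsingleton.elim b _) hb)]
  by_cases h : p.1 = -(N:ℤ)
  · rw [if_pos ((hit_zero N p _).mpr h), if_pos h]
    simp
  · rw [if_neg (fun hh => h ((hit_zero N p _).mp hh)), if_neg h]

lemma Q_succ {p : ℤ × ℤ} (h1 : p.1 ≠ -(N:ℤ)) (h2 : p.1 ≠ 1) (n : ℕ) :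
    Q N (n+1) p = ∑' z : ℤ, animalStepLaw z * Q N n (stepD z p) := by
  classical
  simp only [Q]
  rw [tsum_fin_succ]
  refine tsum_congr fun z => ?_
  have key : ∀ w : Fin n → ℤ,
      (if hitN N (n+1) p (extSeq (Fin.cons z w : Fin (n+1) → ℤ)) then
          ∏ i, animalStepLaw ((Fin.cons z w : Fin (n+1) → ℤ) i) else 0)
      = animalStepLaw z * (if hitN N n (stepD z p) (extSeq w) then ∏ i, animalStepLaw (w i) else 0) := by
    intro w
    have hg0 : extSeq (Fin.cons z w : Fin (n+1) → ℤ) 0 = z := by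
      simp only [extSeq, dif_pos (Nat.succ_pos n)]
      rfl
    have hiff : hitN N (n+1) p (extSeq (Fin.cons z w : Fin (n+1) → ℤ))
        ↔ hitN N n (stepD z p) (extSeq w) := by
      rw [hit_succ N h1 h2, hg0]
      refine hit_congr N fun i hi => ?_
      simp only [extSeq, dif_pos (by omega : i+1 < n+1), dif_pos hi]
      exact Fin.cons_succ (α := fun _ => ℤ) z w ⟨i, hi⟩
    rw [if_congr hiff rfl rfl]
    have hprod : ∏ i, animalStepLaw ((Fin.cons z w : Fin (n+1) → ℤ) i)
        = animalStepLaw z * ∏ i, animalStepLaw (w i) := by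
      rw [Fin.prod_univ_succ]
      simp only [Fin.cons_zero, Fin.cons_succ]
    rw [hprod]
    split_ifs
    · rfl
    · exact (mul_zero _).symm
  simp_rw [key]
  rw [ENNReal.tsum_mul_left]

/-! ### survival probability -/

noncomputable def W : ℕ → ℤ × ℤ → ENNReal
  | 0, p => if p.1 = -(N:ℤ) ∨ p.1 = 1 then 0 else 1
  | n+1, p => if p.1 = -(N:ℤ) ∨ p.1 = 1 then 0
      else ∑' z : ℤ, animalStepLaw z * W n (stepD z p)

lemma W_boundary {p : ℤ × ℤ} (h : p.1 = -(N:ℤ) ∨ p.1 = 1) : ∀ n, W N n p = 0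
  | 0 => by
    show (if p.1 = -(N:ℤ) ∨ p.1 = 1 then (0:ENNReal) else 1) = 0
    exact if_pos h
  | (n+1) => by
    show (if p.1 = -(N:ℤ) ∨ p.1 = 1 then (0:ENNReal) else _) = 0
    exact if_pos h

lemma W_interior {p : ℤ × ℤ} (h : ¬ (p.1 = -(N:ℤ) ∨ p.1 = 1)) (n : ℕ) :
    W N (n+1) p = ∑' z : ℤ, animalStepLaw z * W N n (stepD z p) := by
  show (if p.1 = -(N:ℤ) ∨ p.1 = 1 then (0:ENNReal) else _) = _
  exact if_neg h

lemma W_le_one : ∀ (n : ℕ) (p : ℤ × ℤ), W N n p ≤ 1 := by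
  intro n
  induction n with
  | zero =>
    intro p
    show (if p.1 = -(N:ℤ) ∨ p.1 = 1 then (0:ENNReal) else 1) ≤ 1
    split_ifs
    · exact zero_le
    · exact le_rfl
  | succ n ih =>
    intro p
    by_cases h : p.1 = -(N:ℤ) ∨ p.1 = 1
    · rw [W_boundary N h]; exact zero_le
    · rw [W_interior N h]
      calc ∑' z : ℤ, animalStepLaw z * W N n (stepD z p)
          ≤ ∑' z : ℤ, animalStepLaw z * 1 :=
            ENNReal.tsum_le_tsum fun z => mul_le_mul_right (ih _) _
        _ = 1 := by simp_rw [mul_one]; exact mu_total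

lemma W_succ_le : ∀ (n : ℕ) (p : ℤ × ℤ), W N (n+1) p ≤ W N n p := by
  intro n
  induction n with
  | zero =>
    intro p
    by_cases h : p.1 = -(N:ℤ) ∨ p.1 = 1
    · rw [W_boundary N h 1, W_boundary N h 0]
    · calc W N 1 p ≤ 1 := W_le_one N 1 p
        _ = W N 0 p := by
          show (1:ENNReal) = if p.1 = -(N:ℤ) ∨ p.1 = 1 then 0 else 1
          exact (if_neg h).symm
  | succ n ih =>
    intro p
    by_cases h : p.1 = -(N:ℤ) ∨ p.1 = 1
    · rw [W_boundary N h]; exact zero_le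
    · rw [W_interior N h, W_interior N h]
      exact ENNReal.tsum_le_tsum fun z => mul_le_mul_right (ih _) _

lemma W_antitone {n n' : ℕ} (h : n ≤ n') (p : ℤ × ℤ) : W N n' p ≤ W N n p := by
  induction n', h using Nat.le_induction with
  | base => exact le_rfl
  | succ n' hn ih => exact (W_succ_le N n' p).trans ih

noncomputable def Wsup (n : ℕ) : ENNReal := ⨆ (p : ℤ × ℤ) (_ : SsetP N p), W N n p

lemma W_le_Wsup {p : ℤ × ℤ} (hp : SsetP N p) (n : ℕ) : W N n p ≤ Wsup N n :=
  le_iSup₂_of_le p hp le_rfl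

lemma Wsup_le_one (n : ℕ) : Wsup N n ≤ 1 := iSup₂_le fun p _ => W_le_one N n p

lemma Wsup_anti {n n' : ℕ} (h : n ≤ n') : Wsup N n' ≤ Wsup N n :=
  iSup₂_le fun p hp => (W_antitone N h p).trans (W_le_Wsup N hp n)

/-! ### upper and lower bounds via the harmonic function -/

lemma hval_corner {p : ℤ × ℤ} (hp : SsetP N p) (h : p.1 = -(N:ℤ)) :
    hval p = ((N:ENNReal)+1) * ((N:ENNReal)+2) := by
  have hp2 : p.2 = -(N:ℤ) := by
    rcases hp with ⟨h1, h2, _⟩ | h4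
    · exfalso; omega
    · rw [h4]
  simp only [hval, h, hp2]
  have e1 : (1 - (-(N:ℤ))).toNat = N + 1 := by omega
  have e2 : (2 - (-(N:ℤ))).toNat = N + 2 := by omega
  rw [e1, e2]
  push_cast
  ring

lemma hval_one {p : ℤ × ℤ} (h : p.1 = 1) : hval p = 0 := by
  simp [hval, h]

lemma hval_le_H {p : ℤ × ℤ} (hp : interiorP N p) :
    hval p ≤ ((N:ENNReal)+1) * ((N:ENNReal)+2) := by
  obtain ⟨h1, h2, h3⟩ := hp
  have e1 : ((1 - p.1).toNat : ENNReal) ≤ (N:ENNReal) + 1 := by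
    calc ((1 - p.1).toNat : ENNReal) ≤ ((N+1 : ℕ) : ENNReal) := Nat.cast_le.mpr (by omega)
      _ = (N:ENNReal) + 1 := by push_cast; ring
  have e2 : ((2 - p.2).toNat : ENNReal) ≤ (N:ENNReal) + 2 := by
    calc ((2 - p.2).toNat : ENNReal) ≤ ((N+2 : ℕ) : ENNReal) := Nat.cast_le.mpr (by omega)
      _ = (N:ENNReal) + 2 := by push_cast; ring
  exact mul_le_mul' e1 e2

lemma Q_upper : ∀ (n : ℕ) (p : ℤ × ℤ), SsetP N p →
    ((N:ENNReal)+1) * ((N:ENNReal)+2) * Q N n p ≤ hval p := by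
  intro n
  induction n with
  | zero =>
    intro p hp
    rw [Q_zero]
    by_cases h : p.1 = -(N:ℤ)
    · rw [if_pos h, mul_one, hval_corner N hp h]
    · rw [if_neg h, mul_zero]; exact zero_le
  | succ n ih =>
    intro p hp
    by_cases h1 : p.1 = -(N:ℤ)
    · rw [Q_top N h1, mul_one, hval_corner N hp h1]
    by_cases h2 : p.1 = 1
    · rw [Q_one N h2, mul_zero]; exact zero_le
    have hint : interiorP N p := interior_of N p hp h2 h1
    rw [Q_succ N h1 h2, ← ENNReal.tsum_mul_left]
    calc ∑' z : ℤ, ((N:ENNReal)+1) * ((N:ENNReal)+2) * (animalStepLaw z * Q N n (stepD z p))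
        ≤ ∑' z : ℤ, animalStepLaw z * hval (stepD z p) := by
          refine ENNReal.tsum_le_tsum fun z => ?_
          by_cases hz : animalStepLaw z = 0
          · simp [hz]
          · rw [mul_left_comm]
            exact mul_le_mul_right (ih (stepD z p) (step_mem N hint (mu_support hz))) _
      _ = hval p := harmonic N hint

lemma QW_lower : ∀ (n : ℕ) (p : ℤ × ℤ), SsetP N p →
    hval p ≤ ((N:ENNReal)+1) * ((N:ENNReal)+2) * (Q N n p + W N n p) := by
  intro n
  induction n with
  | zero =>
    intro p hp
    by_cases h1 : p.1 = -(N:ℤ)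
    · rw [hval_corner N hp h1, Q_zero, if_pos h1]
      calc ((N:ENNReal)+1) * ((N:ENNReal)+2)
          = ((N:ENNReal)+1) * ((N:ENNReal)+2) * 1 := (mul_one _).symm
        _ ≤ _ := mul_le_mul_right le_self_add _
    by_cases h2 : p.1 = 1
    · rw [hval_one h2]; exact zero_le
    have hint : interiorP N p := interior_of N p hp h2 h1
    have hw : W N 0 p = 1 := by
      show (if p.1 = -(N:ℤ) ∨ p.1 = 1 then (0:ENNReal) else 1) = 1
      exact if_neg (not_or.mpr ⟨h1, h2⟩)
    rw [Q_zero, if_neg h1, hw, zero_add, mul_one]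
    exact hval_le_H N hint
  | succ n ih =>
    intro p hp
    by_cases h1 : p.1 = -(N:ℤ)
    · rw [hval_corner N hp h1, Q_top N h1]
      calc ((N:ENNReal)+1) * ((N:ENNReal)+2)
          = ((N:ENNReal)+1) * ((N:ENNReal)+2) * 1 := (mul_one _).symm
        _ ≤ _ := mul_le_mul_right le_self_add _
    by_cases h2 : p.1 = 1
    · rw [hval_one h2]; exact zero_le
    have hint : interiorP N p := interior_of N p hp h2 h1
    rw [← harmonic N hint]
    calc ∑' z : ℤ, animalStepLaw z * hval (stepD z p)
        ≤ ∑' z : ℤ, animalStepLaw z *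
            (((N:ENNReal)+1) * ((N:ENNReal)+2) * (Q N n (stepD z p) + W N n (stepD z p))) := by
          refine ENNReal.tsum_le_tsum fun z => ?_
          by_cases hz : animalStepLaw z = 0
          · simp [hz]
          · exact mul_le_mul_right (ih (stepD z p) (step_mem N hint (mu_support hz))) _
      _ = ((N:ENNReal)+1) * ((N:ENNReal)+2) * (Q N (n+1) p + W N (n+1) p) := by
          have hco : ∀ z : ℤ, animalStepLaw z *
              (((N:ENNReal)+1) * ((N:ENNReal)+2) * (Q N n (stepD z p) + W N n (stepD z p)))
              = ((N:ENNReal)+1) * ((N:ENNReal)+2) *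
                (animalStepLaw z * Q N n (stepD z p) + animalStepLaw z * W N n (stepD z p)) := by
            intro z; ring
          simp_rw [hco]
          rw [ENNReal.tsum_mul_left, ENNReal.tsum_add,
            ← Q_succ N h1 h2 n, ← W_interior N (not_or.mpr ⟨h1, h2⟩) n]


/-! ### geometric decay of the survival probability -/

lemma tsum_split_one (f : ℤ → ENNReal) :
    ∑' z : ℤ, f z = f 1 + ∑' z : ℤ, (if z = 1 then 0 else f z) := by
  rw [ENNReal.tsum_eq_add_tsum_ite 1]
  congr 1
  exact tsum_congr fun z => by split_ifs <;> rfl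

lemma decay_scalar (j : ℕ) :
    (2/3:ENNReal) * (1 - (2/3:ENNReal)^j) + 3⁻¹ = 1 - (2/3:ENNReal)^(j+1) := by
  have hle : (2/3:ENNReal)^(j+1) ≤ 2/3 := by
    calc (2/3:ENNReal)^(j+1) ≤ (2/3:ENNReal)^1 :=
        pow_le_pow_of_le_one (zero_le) two_thirds_le_one (by omega)
      _ = 2/3 := pow_one _
  have hmul : (2/3:ENNReal) * (1 - (2/3:ENNReal)^j)
      = 2/3 - (2/3:ENNReal)^(j+1) := by
    rw [ENNReal.mul_sub (fun _ _ => by simp [ENNReal.div_eq_top]), mul_one]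
    congr 1
    rw [pow_succ, mul_comm]
  rw [hmul]
  have hxtop : (2/3:ENNReal)^(j+1) ≠ ⊤ :=
    ne_top_of_le_ne_top (by simp [ENNReal.div_eq_top]) hle
  refine (ENNReal.sub_eq_of_eq_add hxtop ?_).symm
  rw [add_right_comm, tsub_add_cancel_of_le hle, two_thirds_add_third]

lemma W_decay : ∀ j : ℕ, 1 ≤ j → ∀ p : ℤ × ℤ, SsetP N p → (1:ℤ) - p.1 ≤ (j:ℤ) →
    ∀ n : ℕ, W N (n+j) p ≤ (1 - (2/3:ENNReal)^j) * Wsup N n := by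
  intro j hj
  induction j, hj using Nat.le_induction with
  | base =>
    intro p hp hle n
    by_cases hb : p.1 = -(N:ℤ) ∨ p.1 = 1
    · rw [W_boundary N hb]; exact zero_le
    have hint : interiorP N p := interior_of N p hp (fun h => hb (Or.inr h)) (fun h => hb (Or.inl h))
    have hq := hint
    obtain ⟨hq1, hq2, hq3⟩ := hq
    have hp1 : p.1 = 0 := by omega
    rw [W_interior N hb, tsum_split_one]
    have hzero : animalStepLaw 1 * W N n (stepD 1 p) = 0 := by
      have hstep : (stepD 1 p).1 = 1 := by
        rw [stepD_eq, if_pos (by omega)]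
        simp only
        omega
      rw [W_boundary N (Or.inr hstep), mul_zero]
    rw [hzero, zero_add]
    calc ∑' z : ℤ, (if z = 1 then 0 else animalStepLaw z * W N n (stepD z p))
        ≤ ∑' z : ℤ, (if z = 1 then 0 else animalStepLaw z) * Wsup N n := by
          refine ENNReal.tsum_le_tsum fun z => ?_
          split_ifs with h
          · simp
          · by_cases hz : animalStepLaw z = 0
            · simp [hz]
            · exact mul_le_mul_right
                (W_le_Wsup N (step_mem N hint (Or.inr ((mu_support hz).resolve_left h))) n) _
      _ = 3⁻¹ * Wsup N n := by rw [ENNReal.tsum_mul_right, mu_offone_total, mul_comm]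
      _ = (1 - (2/3:ENNReal)^1) * Wsup N n := by rw [pow_one, one_sub_two_thirds]
  | succ j hj ih =>
    intro p hp hle n
    by_cases hb : p.1 = -(N:ℤ) ∨ p.1 = 1
    · rw [W_boundary N hb]; exact zero_le
    have hint : interiorP N p := interior_of N p hp (fun h => hb (Or.inr h)) (fun h => hb (Or.inl h))
    by_cases hcase : (1:ℤ) - p.1 ≤ (j:ℤ)
    · calc W N (n+(j+1)) p = W N ((n+1)+j) p := by rw [show n+(j+1) = (n+1)+j by omega]
        _ ≤ (1 - (2/3:ENNReal)^j) * Wsup N (n+1) := ih p hp hcase (n+1)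
        _ ≤ (1 - (2/3:ENNReal)^(j+1)) * Wsup N n :=
            mul_le_mul'
              (tsub_le_tsub_left
                (pow_le_pow_of_le_one (zero_le) two_thirds_le_one (by omega)) 1)
              (Wsup_anti N (by omega))
    · have hW : W N (n+(j+1)) p = ∑' z : ℤ, animalStepLaw z * W N (n+j) (stepD z p) := by
        rw [show n+(j+1) = (n+j)+1 by omega]
        exact W_interior N hb (n+j)
      have hstep1 : stepD 1 p = (p.1+1, p.2) := by
        obtain ⟨_, h2, _⟩ := hint
        rw [stepD_eq, if_pos (by omega), min_eq_left (by omega)]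
      have hup : animalStepLaw 1 * W N (n+j) (stepD 1 p)
          ≤ 2/3 * ((1 - (2/3:ENNReal)^j) * Wsup N n) := by
        rw [mu_one]
        refine mul_le_mul_right ?_ _
        have hS : SsetP N (stepD 1 p) := step_mem N hint (Or.inl rfl)
        rw [hstep1] at hS ⊢
        refine ih (p.1+1, p.2) hS ?_ n
        simp only
        omega
      rw [hW, tsum_split_one]
      have hrest : ∑' z : ℤ, (if z = 1 then 0 else animalStepLaw z * W N (n+j) (stepD z p))
          ≤ 3⁻¹ * Wsup N n := by
        calc ∑' z : ℤ, (if z = 1 then 0 else animalStepLaw z * W N (n+j) (stepD z p))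
            ≤ ∑' z : ℤ, (if z = 1 then 0 else animalStepLaw z) * Wsup N n := by
              refine ENNReal.tsum_le_tsum fun z => ?_
              split_ifs with h
              · simp
              · by_cases hz : animalStepLaw z = 0
                · simp [hz]
                · refine mul_le_mul_right ?_ _
                  calc W N (n+j) (stepD z p)
                      ≤ Wsup N (n+j) :=
                        W_le_Wsup N
                          (step_mem N hint (Or.inr ((mu_support hz).resolve_left h))) (n+j)
                    _ ≤ Wsup N n := Wsup_anti N (by omega)
          _ = 3⁻¹ * Wsup N n := by rw [ENNReal.tsum_mul_right, mu_offone_total, mul_comm]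
      calc animalStepLaw 1 * W N (n+j) (stepD 1 p)
            + ∑' z : ℤ, (if z = 1 then 0 else animalStepLaw z * W N (n+j) (stepD z p))
          ≤ 2/3 * ((1 - (2/3:ENNReal)^j) * Wsup N n) + 3⁻¹ * Wsup N n := add_le_add hup hrest
        _ = ((2/3:ENNReal) * (1 - (2/3:ENNReal)^j) + 3⁻¹) * Wsup N n := by ring
        _ = (1 - (2/3:ENNReal)^(j+1)) * Wsup N n := by rw [decay_scalar]

lemma Wsup_step (n : ℕ) :
    Wsup N (n + (N+1)) ≤ (1 - (2/3:ENNReal)^(N+1)) * Wsup N n := by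
  refine iSup₂_le fun p hp => ?_
  refine W_decay N (N+1) (by omega) p hp ?_ n
  rcases hp with ⟨h1, h2, _⟩ | h4
  · push_cast
    omega
  · rw [h4]
    push_cast
    omega

lemma Wsup_pow : ∀ k : ℕ, Wsup N (k*(N+1)) ≤ (1 - (2/3:ENNReal)^(N+1))^k := by
  intro k
  induction k with
  | zero => simpa using Wsup_le_one N 0
  | succ k ih =>
    rw [show (k+1)*(N+1) = k*(N+1) + (N+1) by ring]
    calc Wsup N (k*(N+1) + (N+1)) ≤ (1 - (2/3:ENNReal)^(N+1)) * Wsup N (k*(N+1)) := Wsup_step N _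
      _ ≤ (1 - (2/3:ENNReal)^(N+1)) * (1 - (2/3:ENNReal)^(N+1))^k := mul_le_mul_right ih _
      _ = (1 - (2/3:ENNReal)^(N+1))^(k+1) := (mul_comm _ _).trans (pow_succ _ _).symm

lemma iInf_W {p : ℤ × ℤ} (hp : SsetP N p) : ⨅ n, W N n p = 0 := by
  refine le_antisymm ?_ (zero_le)
  set c := 1 - (2/3:ENNReal)^(N+1) with hc_def
  have hck : ∀ k : ℕ, (⨅ n, W N n p) ≤ c^k := fun k =>
    le_trans (iInf_le _ (k*(N+1))) (le_trans (W_le_Wsup N hp _) (Wsup_pow N k))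
  have hc : c < 1 := by
    refine ENNReal.sub_lt_self ENNReal.one_ne_top one_ne_zero ?_
    refine pow_ne_zero _ ?_
    simp [ENNReal.div_eq_zero_iff]
  have htd := ENNReal.tendsto_atTop_zero.mp (ENNReal.tendsto_pow_atTop_nhds_zero_of_lt_one hc)
  refine ENNReal.le_of_forall_pos_le_add fun ε hε _ => ?_
  obtain ⟨K, hK⟩ := htd (ε : ENNReal) (by exact_mod_cast hε)
  calc (⨅ n, W N n p) ≤ c^K := hck K
    _ ≤ (ε : ENNReal) := hK K le_rfl
    _ ≤ 0 + (ε : ENNReal) := by rw [zero_add]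

/-! ### identification of the limit -/

lemma Q_limit {p : ℤ × ℤ} (hp : SsetP N p) :
    (⨆ n, Q N n p) = hval p / (((N:ENNReal)+1) * ((N:ENNReal)+2)) := by
  have hH0 : ((N:ENNReal)+1) * ((N:ENNReal)+2) ≠ 0 := by
    simp only [ne_eq, mul_eq_zero, add_eq_zero, not_or]
    norm_num
  have hHtop : ((N:ENNReal)+1) * ((N:ENNReal)+2) ≠ ⊤ :=
    ENNReal.mul_ne_top
      (ENNReal.add_ne_top.mpr ⟨ENNReal.natCast_ne_top N, ENNReal.one_ne_top⟩)
      (ENNReal.add_ne_top.mpr ⟨ENNReal.natCast_ne_top N, by norm_num⟩)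
  apply le_antisymm
  · refine iSup_le fun n => ?_
    rw [ENNReal.le_div_iff_mul_le (Or.inl hH0) (Or.inl hHtop), mul_comm]
    exact Q_upper N n p hp
  · have h1 : ∀ n, hval p / (((N:ENNReal)+1) * ((N:ENNReal)+2)) ≤ Q N n p + W N n p := by
      intro n
      rw [ENNReal.div_le_iff_le_mul (Or.inl hH0) (Or.inl hHtop), mul_comm]
      exact QW_lower N n p hp
    have h2 : hval p / (((N:ENNReal)+1) * ((N:ENNReal)+2))
        ≤ (⨆ n, Q N n p) + ⨅ n, W N n p := by
      rw [ENNReal.add_iInf]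
      exact le_iInf fun n =>
        (h1 n).trans (add_le_add_left (le_iSup (fun k => Q N k p) n) (W N n p))
    rwa [iInf_W N hp, add_zero] at h2

end WithN2



/-! ### from the walk on pairs back to `shavedFrom` -/

lemma shavedFrom_eq (g : ℕ → ℤ) (m x : ℤ) : ∀ n, shavedFrom g m x n = walk g (x, min m x) n
  | 0 => rfl
  | (n+1) => by
    show (_, _) = stepD (g n) (walk g (x, min m x) n)
    rw [← shavedFrom_eq g m x n]
    rfl

/-! ### the measure-theoretic computation -/

section Measure

variable {Ω : Type*} [MeasurableSpace Ω] (P : MeasureTheory.Measure Ω)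
  [MeasureTheory.IsProbabilityMeasure P] (ξ : ℕ → Ω → ℤ)

lemma meas_cyl
    (hindep : ProbabilityTheory.iIndepFun ξ P)
    (hlaw : ∀ i, ∀ z : ℤ, P {ω | ξ i ω = z} = animalStepLaw z)
    (n : ℕ) (v : Fin n → ℤ) :
    P {ω | ∀ i : Fin n, ξ i ω = v i} = ∏ i, animalStepLaw (v i) := by
  have hset : {ω | ∀ i : Fin n, ξ i ω = v i}
      = ⋂ i ∈ Finset.range n, ξ i ⁻¹' {extSeq v i} := by
    ext ω
    simp only [Set.mem_setOf_eq, Set.mem_iInter, Set.mem_preimage, Set.mem_singleton_iff,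
      Finset.mem_range]
    constructor
    · intro h i hi
      rw [extSeq_lt v hi]
      exact h ⟨i, hi⟩
    · intro h i
      have h2 := h i.1 i.2
      rwa [extSeq_lt v i.2] at h2
  rw [hset, hindep.measure_inter_preimage_eq_mul (Finset.range n)
    (fun i _ => measurableSet_singleton _)]
  have h1 : ∀ i ∈ Finset.range n, P (ξ i ⁻¹' {extSeq v i}) = animalStepLaw (extSeq v i) :=
    fun i _ => hlaw i (extSeq v i)
  rw [Finset.prod_congr rfl h1,
    ← Fin.prod_univ_eq_prod_range (fun i => animalStepLaw (extSeq v i)) n]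
  refine Finset.prod_congr rfl fun i _ => ?_
  rw [extSeq_lt v i.2]

open Classical in
lemma meas_hit
    (hmeas : ∀ i, Measurable (ξ i))
    (hindep : ProbabilityTheory.iIndepFun ξ P)
    (hlaw : ∀ i, ∀ z : ℤ, P {ω | ξ i ω = z} = animalStepLaw z)
    (N n : ℕ) (p : ℤ × ℤ) :
    P {ω | hitN N n p (fun i => ξ i ω)} = Q N n p := by
  have hrep : {ω | hitN N n p (fun i => ξ i ω)}
      = ⋃ v : {v : Fin n → ℤ // hitN N n p (extSeq v)},
          {ω | ∀ i : Fin n, ξ i ω = v.1 i} := by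
    ext ω
    simp only [Set.mem_setOf_eq, Set.mem_iUnion]
    constructor
    · intro h
      refine ⟨⟨fun i => ξ i.1 ω, ?_⟩, fun i => rfl⟩
      exact (hit_congr N (fun i hi =>
        (extSeq_lt (fun j : Fin n => ξ j.1 ω) hi).symm)).mp h
    · rintro ⟨⟨v, hv⟩, hvω⟩
      refine (hit_congr N (fun i hi => ?_)).mpr hv
      show ξ i ω = extSeq v i
      rw [extSeq_lt v hi]
      exact hvω ⟨i, hi⟩
  have hdisj : Pairwise (Function.onFun Disjoint
      (fun v : {v : Fin n → ℤ // hitN N n p (extSeq v)} =>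
        {ω | ∀ i : Fin n, ξ i ω = v.1 i})) := by
    intro a b hab
    refine Set.disjoint_left.mpr fun ω ha hb => hab ?_
    exact Subtype.ext (funext fun i => (ha i).symm.trans (hb i))
  have hms : ∀ v : {v : Fin n → ℤ // hitN N n p (extSeq v)},
      MeasurableSet {ω | ∀ i : Fin n, ξ i ω = v.1 i} := by
    intro v
    have heq : {ω | ∀ i : Fin n, ξ i ω = v.1 i} = ⋂ i : Fin n, ξ i ⁻¹' {v.1 i} := by
      ext ω
      simp [Set.mem_iInter]
    rw [heq]
    exact MeasurableSet.iInter fun i => (hmeas i) (measurableSet_singleton _)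
  rw [hrep, MeasureTheory.measure_iUnion hdisj hms]
  have hterm : ∀ v : {v : Fin n → ℤ // hitN N n p (extSeq v)},
      P {ω | ∀ i : Fin n, ξ i ω = v.1 i} = ∏ i, animalStepLaw (v.1 i) :=
    fun v => meas_cyl P ξ hindep hlaw n v.1
  rw [tsum_congr hterm]
  have hsub : ∑' v : {v : Fin n → ℤ // hitN N n p (extSeq v)}, ∏ i, animalStepLaw (v.1 i)
      = ∑' v : (Fin n → ℤ),
          Set.indicator {v : Fin n → ℤ | hitN N n p (extSeq v)}
            (fun v => ∏ i, animalStepLaw (v i)) v :=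
    tsum_subtype {v : Fin n → ℤ | hitN N n p (extSeq v)} (fun v => ∏ i, animalStepLaw (v i))
  rw [hsub]
  simp only [Q]
  refine tsum_congr fun v => ?_
  by_cases h : hitN N n p (extSeq v)
  · simp [Set.indicator_apply, Set.mem_setOf_eq, h]
  · simp [Set.indicator_apply, Set.mem_setOf_eq, h]

end Measure

end ShavedProof

/-- exit problem for the shaved walk. Let m ≤ x ≤ 0 and let Š be
the shaved walk started from (m,x). For every N with −N < m, letting
τ_{−N} (resp. τ₁) be the hitting time of −N (resp. 1) by Š, one has
P(τ_{−N} < τ₁) = (|x|+1)(|m|+2) / ((N+1)(N+2)). -/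
theorem shaved_walk_exit_problem
    {Ω : Type*} [MeasurableSpace Ω] (P : Measure Ω) [IsProbabilityMeasure P]
    (ξ : ℕ → Ω → ℤ) (hmeas : ∀ i, Measurable (ξ i))
    (hindep : ProbabilityTheory.iIndepFun ξ P)
    (hlaw : ∀ i, ∀ z : ℤ, P {ω | ξ i ω = z} = animalStepLaw z)
    (m x : ℤ) (hmx : m ≤ x) (hx0 : x ≤ 0) (N : ℕ) (hN : -(N : ℤ) < m) :
    P {ω | ∃ n : ℕ, (shavedFrom (fun i => ξ i ω) m x n).1 = -(N : ℤ) ∧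
        ∀ j ≤ n, (shavedFrom (fun i => ξ i ω) m x j).1 ≠ 1} =
      (((x.natAbs : ENNReal) + 1) * ((m.natAbs : ENNReal) + 2)) /
        (((N : ENNReal) + 1) * ((N : ENNReal) + 2)) := by
  classical
  have hmin : min m x = m := min_eq_left hmx
  have hbw : ∀ (ω : Ω) (k : ℕ),
      shavedFrom (fun i => ξ i ω) m x k = ShavedProof.walk (fun i => ξ i ω) (x, m) k := by
    intro ω k
    rw [ShavedProof.shavedFrom_eq, hmin]
  have hS : ShavedProof.SsetP N (x, m) := Or.inl ⟨hN, hmx, by show x ≤ (1:ℤ); omega⟩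
  have hEv : {ω | ∃ n : ℕ, (shavedFrom (fun i => ξ i ω) m x n).1 = -(N : ℤ) ∧
        ∀ j ≤ n, (shavedFrom (fun i => ξ i ω) m x j).1 ≠ 1}
      = ⋃ n : ℕ, {ω | ShavedProof.hitN N n (x, m) (fun i => ξ i ω)} := by
    ext ω
    simp only [Set.mem_setOf_eq, Set.mem_iUnion]
    constructor
    · rintro ⟨n, h1, h2⟩
      exact ⟨n, n, le_rfl, by rw [← hbw ω n]; exact h1,
        fun j hj => by rw [← hbw ω j]; exact h2 j hj⟩
    · rintro ⟨n, k, hk, h1, h2⟩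
      exact ⟨k, by rw [hbw ω k]; exact h1, fun j hj => by rw [hbw ω j]; exact h2 j hj⟩
  have hdir : Directed (· ⊆ ·)
      (fun n : ℕ => {ω | ShavedProof.hitN N n (x, m) (fun i => ξ i ω)}) := by
    refine Monotone.directed_le fun a b hab => ?_
    intro ω h
    exact ShavedProof.hit_mono N hab h
  rw [hEv, Directed.measure_iUnion hdir]
  have h1 : (⨆ n, P {ω | ShavedProof.hitN N n (x, m) (fun i => ξ i ω)})
      = ⨆ n, ShavedProof.Q N n (x, m) :=
    iSup_congr fun n => ShavedProof.meas_hit P ξ hmeas hindep hlaw N n (x, m)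
  rw [h1, ShavedProof.Q_limit N hS]
  have hv : ShavedProof.hval (x, m)
      = ((x.natAbs : ENNReal) + 1) * ((m.natAbs : ENNReal) + 2) := by
    simp only [ShavedProof.hval]
    have e1 : (1 - (x, m).1).toNat = x.natAbs + 1 := by
      show (1 - x).toNat = x.natAbs + 1
      omega
    have e2 : (2 - (x, m).2).toNat = m.natAbs + 2 := by
      show (2 - m).toNat = m.natAbs + 2
      omega
    rw [e1, e2]
    push_cast
    ring
  rw [hv]
end

section
/- For every natural number n, the sum over all integers k ≥ 1 and all strictly increasing tuples 0 ≤ x_1 < x_2 < … < x_k ≤ n of the product ∏_{i=1}^{k−1} (2(x_{i+1} − x_i) − 1) (the empty product for k = 1 being 1) equals 3^n. Equivalently, ∑_{∅ ≠ X ⊆ {0,1,…,n}} ∏ (2·(consecutive gaps of X) − 1) = 3^n. -/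
/-- For a finite set of naturals x₁ < x₂ < … < x_k, the product
∏_{i=1}^{k−1} (2(x_{i+1} − x_i) − 1), equal to 1 when k ≤ 1. -/
def gapProd (X : Finset ℕ) : ℤ :=
  (((X.sort (· ≤ ·)).zip (X.sort (· ≤ ·)).tail).map
    (fun p => 2 * ((p.2 : ℤ) - (p.1 : ℤ)) - 1)).prod

/-- Gap product of a plain list. -/
def gapL (l : List ℕ) : ℤ :=
  ((l.zip l.tail).map (fun p => 2 * ((p.2 : ℤ) - (p.1 : ℤ)) - 1)).prod

lemma gapProd_eq_gapL (X : Finset ℕ) : gapProd X = gapL (X.sort (· ≤ ·)) := rfl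

lemma gapL_cons_cons (a b : ℕ) (l : List ℕ) :
    gapL (a :: b :: l) = (2 * ((b : ℤ) - a) - 1) * gapL (b :: l) := by
  simp [gapL]

lemma gapL_append_last (l : List ℕ) (a t : ℕ) :
    gapL ((a :: l) ++ [t]) =
      gapL (a :: l) * (2 * ((t : ℤ) - ((a :: l).getLast (by simp) : ℕ)) - 1) := by
  induction l generalizing a with
  | nil => simp [gapL]
  | cons b l ih =>
      have h1 : ((a :: b :: l) ++ [t]) = a :: ((b :: l) ++ [t]) := by simp
      rw [h1]
      have h2 : (b :: l) ++ [t] = b :: (l ++ [t]) := by simp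
      rw [h2, gapL_cons_cons, ← h2, ih b, gapL_cons_cons]
      have h3 : (a :: b :: l).getLast (by simp) = (b :: l).getLast (by simp) := by
        simp [List.getLast]
      rw [h3]; ring

lemma sort_insert_max (s : Finset ℕ) (t : ℕ) (h : ∀ x ∈ s, x < t) :
    (insert t s).sort (· ≤ ·) = s.sort (· ≤ ·) ++ [t] := by
  have ht : t ∉ s := fun hts => lt_irrefl t (h t hts)
  refine List.Perm.eq_of_pairwise' (r := (· ≤ ·)) ?_ ?_ ?_
  rotate_right
  · refine ((insert t s).sort_perm_toList (· ≤ ·)).trans ?_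
    refine ((Finset.toList_insert ht).trans ?_)
    refine (List.Perm.cons t (s.sort_perm_toList (· ≤ ·)).symm).trans ?_
    exact (List.perm_append_singleton t _).symm
  · exact (insert t s).pairwise_sort (· ≤ ·)
  · refine List.pairwise_append.mpr ⟨s.pairwise_sort (· ≤ ·), List.pairwise_singleton _ t, ?_⟩
    intro a ha b hb
    rw [List.mem_singleton] at hb
    subst hb
    exact le_of_lt (h a (Finset.mem_sort (α := ℕ) (· ≤ ·) |>.mp ha))

lemma gapProd_singleton (t : ℕ) : gapProd {t} = 1 := by
  simp [gapProd]

lemma gapProd_insert (s : Finset ℕ) (hs : s.Nonempty) (t : ℕ) (h : ∀ x ∈ s, x < t) :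
    gapProd (insert t s) = gapProd s * (2 * ((t : ℤ) - (s.max' hs : ℕ)) - 1) := by
  rw [gapProd_eq_gapL, gapProd_eq_gapL, sort_insert_max s t h]
  have hne : s.sort (· ≤ ·) ≠ [] := by
    have : (s.sort (· ≤ ·)).length ≠ 0 := by
      rw [Finset.length_sort]
      exact Finset.card_ne_zero.mpr hs
    exact fun hnil => this (by rw [hnil]; rfl)
  obtain ⟨a, l, hal⟩ := List.exists_cons_of_ne_nil hne
  rw [hal, gapL_append_last]
  congr 2
  have : s.max' hs = (a :: l).getLast (by simp) := by
    rw [Finset.max'_eq_sorted_last]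
    rw [List.getLast_eq_getElem]
    simp only [hal]
  rw [this]

lemma max'_insert_top (X : Finset ℕ) (m : ℕ) (hX : ∀ x ∈ X, x ≤ m) :
    (insert m X).max' (Finset.insert_nonempty m X) = m := by
  apply le_antisymm
  · apply Finset.max'_le
    intro y hy
    rcases Finset.mem_insert.mp hy with h | h
    · exact h.le
    · exact hX y h
  · exact Finset.le_max' _ m (Finset.mem_insert_self m X)

lemma sum_insert_G (m : ℕ) : ∀ t : ℕ, m < t →
    ∑ X ∈ (Finset.range (m+1)).powerset, gapProd (insert t X)
      = 2 * 3 ^ m * ((t : ℤ) - m) := by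
  induction m with
  | zero =>
      intro t ht
      have h01 : (Finset.range 1).powerset = {∅, {0}} := by decide
      rw [h01]
      rw [Finset.sum_pair ((Finset.singleton_ne_empty (0:ℕ)).symm)]
      rw [show insert t (∅ : Finset ℕ) = {t} from rfl, gapProd_singleton]
      rw [gapProd_insert {0} (Finset.singleton_nonempty 0) t (by simpa using ht)]
      rw [gapProd_singleton, Finset.max'_singleton]
      push_cast
      ring
  | succ m ih =>
      intro t ht
      have hrange : Finset.range (m+2) = insert (m+1) (Finset.range (m+1)) := by
        rw [Finset.range_add_one]
      rw [hrange, Finset.powerset_insert]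
      have hdisj : Disjoint (Finset.range (m+1)).powerset
          ((Finset.range (m+1)).powerset.image (insert (m+1))) := by
        rw [Finset.disjoint_left]
        intro X hX hX'
        obtain ⟨Y, hY, hYX⟩ := Finset.mem_image.mp hX'
        have h1 : m+1 ∈ X := hYX ▸ Finset.mem_insert_self _ _
        have h2 : X ⊆ Finset.range (m+1) := Finset.mem_powerset.mp hX
        exact absurd (Finset.mem_range.mp (h2 h1)) (lt_irrefl _)
      rw [Finset.sum_union hdisj]
      have hinj : ∀ Y ∈ (Finset.range (m+1)).powerset, ∀ Z ∈ (Finset.range (m+1)).powerset,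
          insert (m+1) Y = insert (m+1) Z → Y = Z := by
        intro Y hY Z hZ hYZ
        have hYm : m+1 ∉ Y := fun h =>
          absurd (Finset.mem_range.mp (Finset.mem_powerset.mp hY h)) (lt_irrefl _)
        have hZm : m+1 ∉ Z := fun h =>
          absurd (Finset.mem_range.mp (Finset.mem_powerset.mp hZ h)) (lt_irrefl _)
        rw [← Finset.erase_insert hYm, ← Finset.erase_insert hZm, hYZ]
      rw [Finset.sum_image hinj]
      have hterm : ∀ Y ∈ (Finset.range (m+1)).powerset,
          gapProd (insert t (insert (m+1) Y))
            = gapProd (insert (m+1) Y) * (2 * ((t : ℤ) - (m+1)) - 1) := by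
        intro Y hY
        have hYle : ∀ x ∈ Y, x ≤ m := fun x hx =>
          Nat.lt_succ_iff.mp (Finset.mem_range.mp (Finset.mem_powerset.mp hY hx))
        have hlt : ∀ x ∈ insert (m+1) Y, x < t := by
          intro x hx
          rcases Finset.mem_insert.mp hx with h | h
          · omega
          · have := hYle x h; omega
        rw [gapProd_insert _ (Finset.insert_nonempty _ _) t hlt,
          max'_insert_top Y (m+1) (fun x hx => (hYle x hx).trans (Nat.le_succ m))]
        push_cast
        ring
      rw [Finset.sum_congr rfl hterm, ← Finset.sum_mul]
      rw [ih (m+1) (Nat.lt_succ_self m), ih t (by omega)]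
      push_cast
      ring

/-- For every n,
∑_{∅ ≠ X ⊆ {0,1,…,n}} ∏ (2·(consecutive gaps of X) − 1) = 3ⁿ. -/
theorem sum_gapProd_eq_three_pow (n : ℕ) :
    ∑ X ∈ (Finset.range (n+1)).powerset.filter (fun X => X ≠ ∅), gapProd X
      = 3 ^ n := by
  induction n with
  | zero =>
      have : (Finset.range 1).powerset.filter (fun X => X ≠ ∅) = {{0}} := by decide
      rw [this, Finset.sum_singleton, gapProd_singleton]
      norm_num
  | succ n ih =>
      have hrange : Finset.range (n+2) = insert (n+1) (Finset.range (n+1)) := by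
        rw [Finset.range_add_one]
      rw [hrange, Finset.powerset_insert, Finset.filter_union]
      have himg : ((Finset.range (n+1)).powerset.image (insert (n+1))).filter
          (fun X => X ≠ ∅) = (Finset.range (n+1)).powerset.image (insert (n+1)) := by
        apply Finset.filter_true_of_mem
        intro X hX
        obtain ⟨Y, hY, hYX⟩ := Finset.mem_image.mp hX
        rw [← hYX]
        exact Finset.insert_ne_empty _ _
      rw [himg]
      have hdisj : Disjoint ((Finset.range (n+1)).powerset.filter (fun X => X ≠ ∅))
          ((Finset.range (n+1)).powerset.image (insert (n+1))) := by
        rw [Finset.disjoint_left]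
        intro X hX hX'
        obtain ⟨Y, hY, hYX⟩ := Finset.mem_image.mp hX'
        have h1 : n+1 ∈ X := hYX ▸ Finset.mem_insert_self _ _
        have h2 : X ⊆ Finset.range (n+1) := Finset.mem_powerset.mp (Finset.mem_filter.mp hX).1
        exact absurd (Finset.mem_range.mp (h2 h1)) (lt_irrefl _)
      rw [Finset.sum_union hdisj, ih]
      have hinj : ∀ Y ∈ (Finset.range (n+1)).powerset, ∀ Z ∈ (Finset.range (n+1)).powerset,
          insert (n+1) Y = insert (n+1) Z → Y = Z := by
        intro Y hY Z hZ hYZ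
        have hYm : n+1 ∉ Y := fun h =>
          absurd (Finset.mem_range.mp (Finset.mem_powerset.mp hY h)) (lt_irrefl _)
        have hZm : n+1 ∉ Z := fun h =>
          absurd (Finset.mem_range.mp (Finset.mem_powerset.mp hZ h)) (lt_irrefl _)
        rw [← Finset.erase_insert hYm, ← Finset.erase_insert hZm, hYZ]
      rw [Finset.sum_image hinj]
      rw [sum_insert_G n (n+1) (Nat.lt_succ_self n)]
      push_cast
      ring
end

section
/- Let R be a commutative unital ring, n ≥ 1, and f_1, …, f_n distinct elements of R. For a nonempty subset B = {f_{i_1}, …, f_{i_k}} of F = {f_1,…,f_n} with i_1 < … < i_k, define min B := f_{i_1}, max B := f_{i_k}, η(B) := ∏_{j=1}^{k−1} (f_{i_{j+1}} − f_{i_j} − 1), and η⁺(B) := ∏_{j=1}^{k−1} (f_{i_{j+1}} − f_{i_j} + 1), with η(B) = η⁺(B) = 1 when k = 1. Then: (1) ∑_{∅≠B⊆F} η(B) = η⁺(F); (2) ∑_{∅≠B⊆F} η(B)·max(B) = 1 + (max(F) − 1)·η⁺(F); (3) ∑_{∅≠B⊆F} η(B)·min(B)·max(B) = 1 + (max(F)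 − 1)(min(F) + 1)·η⁺(F). -/
variable {R : Type*} [CommRing R]

/-- η of a subset of indices B = {i₁ < … < i_k} relative to the family f :
∏_{j=1}^{k−1} (f i_{j+1} − f i_j − 1), equal to 1 when k ≤ 1. -/
def etaOf (f : ℕ → R) (B : Finset ℕ) : R :=
  (((B.sort (· ≤ ·)).zip (B.sort (· ≤ ·)).tail).map
    (fun p => f p.2 - f p.1 - 1)).prod

/-- η⁺ of a subset of indices B = {i₁ < … < i_k} relative to the family f :
∏_{j=1}^{k−1} (f i_{j+1} − f i_j + 1), equal to 1 when k ≤ 1. -/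
def etaPlusOf (f : ℕ → R) (B : Finset ℕ) : R :=
  (((B.sort (· ≤ ·)).zip (B.sort (· ≤ ·)).tail).map
    (fun p => f p.2 - f p.1 + 1)).prod


section Aux

open Finset

def chainProd (g : ℕ → ℕ → R) (B : Finset ℕ) : R :=
  (((B.sort (· ≤ ·)).zip (B.sort (· ≤ ·)).tail).map (fun p => g p.1 p.2)).prod

lemma chain_append (g : ℕ → ℕ → R) :
    ∀ (l : List ℕ) (hl : l ≠ []) (a : ℕ),
      ((((l ++ [a]).zip (l ++ [a]).tail).map (fun p => g p.1 p.2)).prod)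
        = (((l.zip l.tail).map (fun p => g p.1 p.2)).prod) * g (l.getLast hl) a
  | [], hl, a => absurd rfl hl
  | [x], _, a => by simp
  | x :: y :: t, _, a => by
    have ih := chain_append g (y :: t) (by simp) a
    simp only [List.cons_append, List.zip_cons_cons, List.tail_cons, List.map_cons,
      List.prod_cons, List.getLast_cons_cons] at *
    rw [ih]; ring

lemma sort_insert_big (a : ℕ) (B : Finset ℕ) (h : ∀ b ∈ B, b < a) :
    (insert a B).sort (· ≤ ·) = B.sort (· ≤ ·) ++ [a] := by
  have ha : a ∉ B := fun hm => lt_irrefl a (h a hm)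
  refine (fun hp hs => List.Perm.eq_of_pairwise' (r := (· ≤ ·)) (Finset.pairwise_sort _ _) hs hp) ?_ ?_
  · have h1 : List.Perm ((insert a B).sort (· ≤ ·)) (a :: B.sort (· ≤ ·)) := by
      rw [← Multiset.coe_eq_coe]
      simp [Finset.sort_eq, Finset.insert_val_of_notMem ha,
        ← Multiset.cons_coe]
    exact h1.trans (List.perm_append_singleton a _).symm
  · rw [List.pairwise_append]
    refine ⟨Finset.pairwise_sort _ _, by simp, ?_⟩
    intro x hx y hy
    simp only [List.mem_singleton] at hy
    subst hy
    exact (h x ((Finset.mem_sort _).mp hx)).le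

lemma getLast_sort (B : Finset ℕ) (hB : B.Nonempty) (h : B.sort (· ≤ ·) ≠ []) :
    (B.sort (· ≤ ·)).getLast h = B.max' hB := by
  rw [List.getLast_eq_getElem, Finset.max'_eq_sorted_last]

lemma sort_ne_nil (B : Finset ℕ) (hB : B.Nonempty) : B.sort (· ≤ ·) ≠ [] := by
  simp [← List.length_pos_iff, Finset.length_sort, Finset.card_pos, hB]

lemma chainProd_insert (g : ℕ → ℕ → R) (a : ℕ) (B : Finset ℕ) (hB : B.Nonempty)
    (h : ∀ b ∈ B, b < a) :
    chainProd g (insert a B) = chainProd g B * g (B.max' hB) a := by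
  unfold chainProd
  rw [sort_insert_big a B h, chain_append g _ (sort_ne_nil B hB) a, getLast_sort B hB]

lemma chainProd_singleton (g : ℕ → ℕ → R) (a : ℕ) : chainProd g {a} = 1 := by
  simp [chainProd, Finset.sort_singleton]

noncomputable def Mx (B : Finset ℕ) : ℕ := WithBot.unbotD 0 B.max
noncomputable def Mn (B : Finset ℕ) : ℕ := WithTop.untopD 0 B.min

lemma max'_eq_Mx (B : Finset ℕ) (h : B.Nonempty) : B.max' h = Mx B := by
  rw [Mx, ← Finset.coe_max' h, WithBot.unbotD_coe]

lemma min'_eq_Mn (B : Finset ℕ) (h : B.Nonempty) : B.min' h = Mn B := by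
  rw [Mn, ← Finset.coe_min' h, WithTop.untopD_coe]

lemma Mx_insert_big (a : ℕ) (B : Finset ℕ) (h : ∀ b ∈ B, b < a) :
    Mx (insert a B) = a := by
  rw [← max'_eq_Mx _ (insert_nonempty a B)]
  refine le_antisymm (Finset.max'_le _ _ _ ?_) (Finset.le_max' _ a (mem_insert_self a B))
  intro y hy
  rcases Finset.mem_insert.mp hy with rfl | hy
  · exact le_rfl
  · exact (h y hy).le

lemma Mn_insert_big (a : ℕ) (B : Finset ℕ) (hB : B.Nonempty) (h : ∀ b ∈ B, b < a) :
    Mn (insert a B) = Mn B := by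
  rw [← min'_eq_Mn _ (insert_nonempty a B), ← min'_eq_Mn _ hB]
  refine le_antisymm (Finset.min'_le _ _ (mem_insert_of_mem (B.min'_mem hB))) ?_
  refine Finset.le_min' _ _ _ ?_
  intro y hy
  rcases Finset.mem_insert.mp hy with rfl | hy
  · exact (Finset.min'_le _ _ (B.min'_mem hB)).trans (h _ (B.min'_mem hB)).le
  · exact Finset.min'_le _ _ hy

lemma Mx_Icc (n : ℕ) (hn : 1 ≤ n) : Mx (Finset.Icc 1 n) = n := by
  rw [← max'_eq_Mx _ ⟨n, Finset.mem_Icc.mpr ⟨hn, le_rfl⟩⟩]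
  refine le_antisymm (Finset.max'_le _ _ _ fun y hy => (Finset.mem_Icc.mp hy).2)
    (Finset.le_max' _ n (Finset.mem_Icc.mpr ⟨hn, le_rfl⟩))

lemma Mn_Icc (n : ℕ) (hn : 1 ≤ n) : Mn (Finset.Icc 1 n) = 1 := by
  rw [← min'_eq_Mn _ ⟨n, Finset.mem_Icc.mpr ⟨hn, le_rfl⟩⟩]
  refine le_antisymm (Finset.min'_le _ _ (Finset.mem_Icc.mpr ⟨le_rfl, hn⟩))
    (Finset.le_min' _ _ _ fun y hy => (Finset.mem_Icc.mp hy).1)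

lemma sum_step (n : ℕ) (g : Finset ℕ → R) :
    ∑ B ∈ ((Finset.Icc 1 (n+1)).powerset.filter (fun B => B ≠ ∅)), g B
    = (∑ B ∈ ((Finset.Icc 1 n).powerset.filter (fun B => B ≠ ∅)), g B
      + ∑ B ∈ ((Finset.Icc 1 n).powerset.filter (fun B => B ≠ ∅)), g (insert (n+1) B))
      + g {n+1} := by
  have hI : Finset.Icc 1 (n+1) = insert (n+1) (Finset.Icc 1 n) := by
    ext x; simp only [Finset.mem_Icc, Finset.mem_insert]; omega
  have hnotmem : (n+1) ∉ Finset.Icc 1 n := by simp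
  rw [hI, Finset.powerset_insert, Finset.filter_union]
  have himg : ((Finset.Icc 1 n).powerset.image (insert (n+1))).filter (fun B => B ≠ ∅)
      = (Finset.Icc 1 n).powerset.image (insert (n+1)) := by
    refine Finset.filter_true_of_mem ?_
    intro B hB
    obtain ⟨C, _, rfl⟩ := Finset.mem_image.mp hB
    exact (Finset.insert_nonempty _ _).ne_empty
  rw [himg]
  have hdisj : Disjoint ((Finset.Icc 1 n).powerset.filter (fun B => B ≠ ∅))
      ((Finset.Icc 1 n).powerset.image (insert (n+1))) := by
    rw [Finset.disjoint_left]
    intro C hC hC'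
    obtain ⟨D, _, rfl⟩ := Finset.mem_image.mp hC'
    have := (Finset.mem_filter.mp hC).1
    exact hnotmem ((Finset.mem_powerset.mp this) (mem_insert_self _ _))
  rw [Finset.sum_union hdisj, add_assoc]
  congr 1
  rw [Finset.sum_image (fun B hB B' hB' hEq => by
    have h1 : (n+1) ∉ B := fun hc => hnotmem (Finset.mem_powerset.mp hB hc)
    have h2 : (n+1) ∉ B' := fun hc => hnotmem (Finset.mem_powerset.mp hB' hc)
    rw [← Finset.erase_insert h1, ← Finset.erase_insert h2, hEq])]
  have : ((Finset.Icc 1 n).powerset.filter (fun B => B ≠ ∅))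
      = (Finset.Icc 1 n).powerset.erase ∅ := Finset.filter_ne' _ _
  rw [this, ← Finset.sum_erase_add _ _ (Finset.empty_mem_powerset (Finset.Icc 1 n))]
  simp

lemma etaOf_insert (f : ℕ → R) (a : ℕ) (B : Finset ℕ) (hB : B.Nonempty)
    (h : ∀ b ∈ B, b < a) :
    etaOf f (insert a B) = etaOf f B * (f a - f (Mx B) - 1) := by
  have := chainProd_insert (fun i j => f j - f i - 1) a B hB h
  rw [max'_eq_Mx B hB] at this
  exact this

lemma etaPlusOf_insert (f : ℕ → R) (a : ℕ) (B : Finset ℕ) (hB : B.Nonempty)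
    (h : ∀ b ∈ B, b < a) :
    etaPlusOf f (insert a B) = etaPlusOf f B * (f a - f (Mx B) + 1) := by
  have := chainProd_insert (fun i j => f j - f i + 1) a B hB h
  rw [max'_eq_Mx B hB] at this
  exact this

lemma etaOf_singleton (f : ℕ → R) (a : ℕ) : etaOf f {a} = 1 :=
  chainProd_singleton (fun i j => f j - f i - 1) a

lemma etaPlusOf_singleton (f : ℕ → R) (a : ℕ) : etaPlusOf f {a} = 1 :=
  chainProd_singleton (fun i j => f j - f i + 1) a

lemma Mx_singleton (a : ℕ) : Mx {a} = a := by
  rw [← max'_eq_Mx _ (Finset.singleton_nonempty a)]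
  exact Finset.max'_singleton a

lemma Mn_singleton (a : ℕ) : Mn {a} = a := by
  rw [← min'_eq_Mn _ (Finset.singleton_nonempty a)]
  exact Finset.min'_singleton a

lemma key (f : ℕ → R) (n : ℕ) (hn : 1 ≤ n) :
    (∑ B ∈ ((Finset.Icc 1 n).powerset.filter (fun B => B ≠ ∅)), etaOf f B
       = etaPlusOf f (Finset.Icc 1 n)) ∧
    (∑ B ∈ ((Finset.Icc 1 n).powerset.filter (fun B => B ≠ ∅)), etaOf f B * f (Mx B)
       = 1 + (f n - 1) * etaPlusOf f (Finset.Icc 1 n)) ∧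
    (∑ B ∈ ((Finset.Icc 1 n).powerset.filter (fun B => B ≠ ∅)), etaOf f B * f (Mn B)
       = (f 1 + 1) * etaPlusOf f (Finset.Icc 1 n) - 1) ∧
    (∑ B ∈ ((Finset.Icc 1 n).powerset.filter (fun B => B ≠ ∅)),
        etaOf f B * f (Mn B) * f (Mx B)
       = 1 + (f n - 1) * (f 1 + 1) * etaPlusOf f (Finset.Icc 1 n)) := by
  induction n, hn using Nat.le_induction with
  | base =>
    have hset : ((Finset.Icc 1 1).powerset.filter (fun B => B ≠ ∅))
        = ({({1} : Finset ℕ)} : Finset (Finset ℕ)) := by decide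
    have hIcc : Finset.Icc 1 1 = ({1} : Finset ℕ) := Finset.Icc_self 1
    rw [hset, hIcc]
    simp [etaOf_singleton, etaPlusOf_singleton, Mx_singleton, Mn_singleton]
    ring
  | succ n hn IH =>
    obtain ⟨ih1, ih2, ih3, ih4⟩ := IH
    have hne : (Finset.Icc 1 n).Nonempty := ⟨1, Finset.mem_Icc.mpr ⟨le_rfl, hn⟩⟩
    have hI : Finset.Icc 1 (n+1) = insert (n+1) (Finset.Icc 1 n) := by
      ext x; simp only [Finset.mem_Icc, Finset.mem_insert]; omega
    have hlt : ∀ b ∈ Finset.Icc 1 n, b < n+1 := fun b hb =>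
      Nat.lt_succ_of_le (Finset.mem_Icc.mp hb).2
    have hE : etaPlusOf f (Finset.Icc 1 (n+1))
        = etaPlusOf f (Finset.Icc 1 n) * (f (n+1) - f n + 1) := by
      rw [hI, etaPlusOf_insert f _ _ hne hlt, Mx_Icc n hn]
    have hmem : ∀ B ∈ ((Finset.Icc 1 n).powerset.filter (fun B => B ≠ ∅)),
        B.Nonempty ∧ ∀ b ∈ B, b < n+1 := by
      intro B hB
      obtain ⟨hsub, hne'⟩ := Finset.mem_filter.mp hB
      exact ⟨Finset.nonempty_iff_ne_empty.mpr hne',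
        fun b hb => hlt b (Finset.mem_powerset.mp hsub hb)⟩
    refine ⟨?_, ?_, ?_, ?_⟩
    · rw [sum_step n (fun B => etaOf f B)]
      have hins : ∀ B ∈ ((Finset.Icc 1 n).powerset.filter (fun B => B ≠ ∅)),
          etaOf f (insert (n+1) B)
            = (f (n+1) - 1) * etaOf f B - etaOf f B * f (Mx B) := by
        intro B hB
        obtain ⟨hBne, hblt⟩ := hmem B hB
        rw [etaOf_insert f _ B hBne hblt]; ring
      rw [Finset.sum_congr rfl hins, Finset.sum_sub_distrib, ← Finset.mul_sum,
        ih1, ih2, etaOf_singleton, hE]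
      ring
    · rw [sum_step n (fun B => etaOf f B * f (Mx B))]
      have hins : ∀ B ∈ ((Finset.Icc 1 n).powerset.filter (fun B => B ≠ ∅)),
          etaOf f (insert (n+1) B) * f (Mx (insert (n+1) B))
            = (f (n+1) * (f (n+1) - 1)) * etaOf f B
              - f (n+1) * (etaOf f B * f (Mx B)) := by
        intro B hB
        obtain ⟨hBne, hblt⟩ := hmem B hB
        rw [etaOf_insert f _ B hBne hblt, Mx_insert_big _ B hblt]; ring
      rw [Finset.sum_congr rfl hins, Finset.sum_sub_distrib, ← Finset.mul_sum,
        ← Finset.mul_sum, ih1, ih2, etaOf_singleton, Mx_singleton, hE]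
      ring
    · rw [sum_step n (fun B => etaOf f B * f (Mn B))]
      have hins : ∀ B ∈ ((Finset.Icc 1 n).powerset.filter (fun B => B ≠ ∅)),
          etaOf f (insert (n+1) B) * f (Mn (insert (n+1) B))
            = (f (n+1) - 1) * (etaOf f B * f (Mn B))
              - etaOf f B * f (Mn B) * f (Mx B) := by
        intro B hB
        obtain ⟨hBne, hblt⟩ := hmem B hB
        rw [etaOf_insert f _ B hBne hblt, Mn_insert_big _ B hBne hblt]; ring
      rw [Finset.sum_congr rfl hins, Finset.sum_sub_distrib, ← Finset.mul_sum,
        ih3, ih4, etaOf_singleton, Mn_singleton, hE]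
      ring
    · rw [sum_step n (fun B => etaOf f B * f (Mn B) * f (Mx B))]
      have hins : ∀ B ∈ ((Finset.Icc 1 n).powerset.filter (fun B => B ≠ ∅)),
          etaOf f (insert (n+1) B) * f (Mn (insert (n+1) B)) * f (Mx (insert (n+1) B))
            = (f (n+1) * (f (n+1) - 1)) * (etaOf f B * f (Mn B))
              - f (n+1) * (etaOf f B * f (Mn B) * f (Mx B)) := by
        intro B hB
        obtain ⟨hBne, hblt⟩ := hmem B hB
        rw [etaOf_insert f _ B hBne hblt, Mn_insert_big _ B hBne hblt,
          Mx_insert_big _ B hblt]; ring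
      rw [Finset.sum_congr rfl hins, Finset.sum_sub_distrib, ← Finset.mul_sum,
        ← Finset.mul_sum, ih3, ih4, etaOf_singleton, Mn_singleton, Mx_singleton, hE]
      ring

end Aux

/-- appendix summation identities. Let f₁, …, fₙ (n ≥ 1) be
distinct elements of a commutative unital ring, F = {f₁,…,fₙ}, and for a nonempty
subset B = {f_{i₁}, …, f_{i_k}} (i₁ < … < i_k) set min B = f_{i₁}, max B = f_{i_k},
η(B) = ∏ (f_{i_{j+1}} − f_{i_j} − 1) and η⁺(B) = ∏ (f_{i_{j+1}} − f_{i_j} + 1).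
Then (1) ∑_{∅≠B⊆F} η(B) = η⁺(F);
(2) ∑_{∅≠B⊆F} η(B)·max(B) = 1 + (max F − 1)·η⁺(F);
(3) ∑_{∅≠B⊆F} η(B)·min(B)·max(B) = 1 + (max F − 1)(min F + 1)·η⁺(F). -/
theorem appendix_summation_identities (n : ℕ) (hn : 1 ≤ n) (f : ℕ → R)
    (hf : Set.InjOn f (Set.Icc 1 n)) :
    (∑ B ∈ ((Finset.Icc 1 n).powerset.filter (fun B => B ≠ ∅)).attach,
        etaOf f B.1
      = etaPlusOf f (Finset.Icc 1 n)) ∧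
    (∑ B ∈ ((Finset.Icc 1 n).powerset.filter (fun B => B ≠ ∅)).attach,
        etaOf f B.1 *
          f (B.1.max' (Finset.nonempty_iff_ne_empty.mpr (Finset.mem_filter.mp B.2).2))
      = 1 + (f n - 1) * etaPlusOf f (Finset.Icc 1 n)) ∧
    (∑ B ∈ ((Finset.Icc 1 n).powerset.filter (fun B => B ≠ ∅)).attach,
        etaOf f B.1 *
          f (B.1.min' (Finset.nonempty_iff_ne_empty.mpr (Finset.mem_filter.mp B.2).2)) *
          f (B.1.max' (Finset.nonempty_iff_ne_empty.mpr (Finset.mem_filter.mp B.2).2))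
      = 1 + (f n - 1) * (f 1 + 1) * etaPlusOf f (Finset.Icc 1 n)) := by
  obtain ⟨h1, h2, h3, h4⟩ := key f n hn
  refine ⟨(Finset.sum_attach _ _).trans h1, ?_, ?_⟩
  · rw [← Finset.sum_attach ((Finset.Icc 1 n).powerset.filter (fun B => B ≠ ∅))
      (fun B => etaOf f B * f (Mx B))] at h2
    rw [← h2]
    exact Finset.sum_congr rfl fun B _ => by rw [max'_eq_Mx]
  · rw [← Finset.sum_attach ((Finset.Icc 1 n).powerset.filter (fun B => B ≠ ∅))
      (fun B => etaOf f B * f (Mn B) * f (Mx B))] at h4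
    rw [← h4]
    exact Finset.sum_congr rfl fun B _ => by rw [max'_eq_Mx, min'_eq_Mn]
end

section
/- Let R be a commutative unital ring, and f_1, …, f_n distinct elements of R, with the notation η, min, max as in the appendix lemma. Then: (1) if n ≥ 2, ∑_{B⊆F, max(B)=f_n} η(B) = (f_n − f_{n−1}) · ∏_{j=2}^{n−1} (f_j − f_{j−1} + 1); (2) if n ≥ 3, ∑_{B⊆F, min(B)=f_1, max(B)=f_n} η(B) = (f_2 − f_1)(f_n − f_{n−1}) · ∏_{j=3}^{n−1} (f_j − f_{j−1} + 1). (Empty products equal 1.) -/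
variable {R : Type*} [CommRing R]

namespace App18

def etaL (f : ℕ → R) : List ℕ → R
  | [] => 1
  | [_] => 1
  | a :: b :: l => (f b - f a - 1) * etaL f (b :: l)

lemma etaOf_eq_etaL (f : ℕ → R) (B : Finset ℕ) :
    etaOf f B = etaL f (B.sort (· ≤ ·)) := by
  unfold etaOf
  generalize (B.sort (· ≤ ·)) = l
  induction l with
  | nil => simp [etaL]
  | cons a t ih =>
    cases t with
    | nil => simp [etaL]
    | cons b u =>
      simp only [List.tail_cons, List.zip_cons_cons, List.map_cons, List.prod_cons, etaL]
      rw [← ih]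
      simp

lemma etaL_congr {f g : ℕ → R} : ∀ l : List ℕ, (∀ x ∈ l, f x = g x) → etaL f l = etaL g l := by
  intro l
  induction l with
  | nil => intro _; rfl
  | cons a t ih =>
    cases t with
    | nil => intro _; rfl
    | cons b u =>
      intro h
      simp only [etaL]
      rw [h a (by simp), h b (by simp), ih (fun x hx => h x (by simp [hx]))]

lemma etaOf_congr {f g : ℕ → R} (B : Finset ℕ) (h : ∀ x ∈ B, f x = g x) :
    etaOf f B = etaOf g B := by
  rw [etaOf_eq_etaL, etaOf_eq_etaL]
  exact etaL_congr _ (fun x hx => h x ((Finset.mem_sort _).mp hx))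

lemma etaL_append (f : ℕ → R) :
    ∀ (l : List ℕ) (hl : l ≠ []) (a : ℕ),
      etaL f (l ++ [a]) = etaL f l * (f a - f (l.getLast hl) - 1) := by
  intro l
  induction l with
  | nil => intro h; exact absurd rfl h
  | cons x t ih =>
    cases t with
    | nil => intro _ a; simp [etaL]
    | cons y u =>
      intro hl a
      have : (x :: y :: u) ++ [a] = x :: ((y :: u) ++ [a]) := rfl
      rw [this]
      show (f y - f x - 1) * etaL f ((y :: u) ++ [a]) = _
      rw [ih (by simp) a]
      have : (x :: y :: u).getLast hl = (y :: u).getLast (by simp) := by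
        simp [List.getLast_cons]
      rw [this, etaL]
      ring

lemma sort_insert_top {C : Finset ℕ} {n : ℕ} (h : ∀ x ∈ C, x < n) :
    (insert n C).sort (· ≤ ·) = C.sort (· ≤ ·) ++ [n] := by
  refine (fun hp hs => List.Perm.eq_of_pairwise' (Finset.pairwise_sort _ _) hs hp) ?_ ?_
  · rw [← Multiset.coe_eq_coe]
    have hn : n ∉ C := fun hn => absurd (h n hn) (lt_irrefl n)
    have : ((C.sort (· ≤ ·) ++ [n] : List ℕ) : Multiset ℕ)
        = (C.sort (· ≤ ·) : Multiset ℕ) + ([n] : List ℕ) := by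
      exact_mod_cast (Multiset.coe_add _ _).symm
    rw [Finset.sort_eq, this, Finset.sort_eq, Finset.insert_val_of_notMem hn]
    have : ([n] : List ℕ) = ({n} : Multiset ℕ) := rfl
    rw [this, add_comm, Multiset.singleton_add]
  · rw [List.pairwise_append]
    refine ⟨Finset.pairwise_sort _ _, by simp, ?_⟩
    intro a ha b hb
    rw [List.mem_singleton] at hb
    subst hb
    exact le_of_lt (h a ((Finset.mem_sort _).mp ha))

lemma getLast_sort {C : Finset ℕ} (hC : C.Nonempty) (h : C.sort (· ≤ ·) ≠ []) :
    (C.sort (· ≤ ·)).getLast h = C.max' hC := by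
  rw [List.getLast_eq_getElem, Finset.max'_eq_sorted_last]

lemma etaOf_singleton (f : ℕ → R) (a : ℕ) : etaOf f {a} = 1 := by
  simp [etaOf]

lemma eta_insert_top (f : ℕ → R) {C : Finset ℕ} (hC : C.Nonempty) {n : ℕ}
    (h : ∀ x ∈ C, x < n) :
    etaOf f (insert n C) = etaOf f C * (f n - f (C.max' hC) - 1) := by
  have hne : C.sort (· ≤ ·) ≠ [] := by
    have : 0 < (C.sort (· ≤ ·)).length := by
      rw [Finset.length_sort]; exact Finset.card_pos.mpr hC
    exact List.length_pos_iff.mp this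
  rw [etaOf_eq_etaL, sort_insert_top h, etaL_append f _ hne n, ← etaOf_eq_etaL,
    getLast_sort hC hne]

end App18

namespace App18

lemma eta_swap_top (f : ℕ → R) (D : Finset ℕ) {m n : ℕ}
    (hD : ∀ x ∈ D, x < m) (hmn : m < n) :
    etaOf (Function.update f m (f n)) (insert m D) = etaOf f (insert n D) := by
  rcases D.eq_empty_or_nonempty with rfl | hne
  · simp [etaOf_singleton]
  · have hDn : ∀ x ∈ D, x < n := fun x hx => lt_trans (hD x hx) hmn
    rw [eta_insert_top _ hne hD, eta_insert_top f hne hDn]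
    have h1 : etaOf (Function.update f m (f n)) D = etaOf f D :=
      etaOf_congr D (fun x hx => Function.update_of_ne (Nat.ne_of_lt (hD x hx)) _ _)
    have h2 : Function.update f m (f n) m = f n := Function.update_self _ _ _
    have h3 : Function.update f m (f n) (D.max' hne) = f (D.max' hne) :=
      Function.update_of_ne (Nat.ne_of_lt (hD _ (D.max'_mem hne))) _ _
    rw [h1, h2, h3]

/-- The constrained sum: over subsets of `Icc 1 n` containing `n` and satisfying `c`. -/
def SG (f : ℕ → R) (c : Finset ℕ → Bool) (n : ℕ) : R :=
  ∑ B ∈ (Finset.Icc 1 n).powerset.filter (fun B => c B ∧ n ∈ B), etaOf f B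

lemma SG_one (f : ℕ → R) (c : Finset ℕ → Bool) :
    SG f c 1 = if c {1} then 1 else 0 := by
  have h1 : Finset.Icc 1 1 = {1} := by simp
  have h2 : ({1} : Finset ℕ).powerset = {∅, {1}} := rfl
  by_cases h : c {1} = true <;>
    simp [SG, h1, h2, Finset.filter_insert,
      Finset.filter_singleton, h, etaOf_singleton]

lemma SG_rec (f : ℕ → R) (c : Finset ℕ → Bool) (n : ℕ) (hn : 2 ≤ n)
    (hc : ∀ (m : ℕ) (B : Finset ℕ), m = n ∨ m = n - 1 → c (insert m B) = c B) :
    SG f c n = (f n - f (n-1) - 1) * SG f c (n-1)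
      + SG (Function.update f (n-1) (f n)) c (n-1) := by
  classical
  have hn1 : 1 ≤ n - 1 := by omega
  have hnn : n - 1 < n := by omega
  rw [SG, ← Finset.sum_filter_add_sum_filter_not
    ((Finset.Icc 1 n).powerset.filter (fun B => c B ∧ n ∈ B)) (fun B => n - 1 ∈ B)]
  congr 1
  · -- part with n-1 ∈ B
    rw [SG, Finset.mul_sum]
    refine Finset.sum_nbij' (fun B => B.erase n) (fun C => insert n C) ?_ ?_ ?_ ?_ ?_
    · intro B hB
      simp only [Finset.mem_filter, Finset.mem_powerset] at hB ⊢
      obtain ⟨⟨hsub, hcB, hnB⟩, hmB⟩ := hB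
      refine ⟨?_, ?_, ?_⟩
      · intro x hx
        rw [Finset.mem_erase] at hx
        have := hsub hx.2
        rw [Finset.mem_Icc] at this ⊢
        omega
      · have : B = insert n (B.erase n) := (Finset.insert_erase hnB).symm
        rw [← hc n (B.erase n) (Or.inl rfl), ← this]; exact hcB
      · exact Finset.mem_erase.mpr ⟨by omega, hmB⟩
    · intro C hC
      simp only [Finset.mem_filter, Finset.mem_powerset] at hC ⊢
      obtain ⟨hsub, hcC, hmC⟩ := hC
      refine ⟨⟨?_, ?_, Finset.mem_insert_self _ _⟩, ?_⟩
      · intro x hx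
        rcases Finset.mem_insert.mp hx with rfl | hx
        · rw [Finset.mem_Icc]; omega
        · have := hsub hx; rw [Finset.mem_Icc] at this ⊢; omega
      · rw [hc n C (Or.inl rfl)]; exact hcC
      · exact Finset.mem_insert_of_mem hmC
    · intro B hB
      simp only [Finset.mem_filter] at hB
      exact Finset.insert_erase hB.1.2.2
    · intro C hC
      simp only [Finset.mem_filter, Finset.mem_powerset] at hC
      apply Finset.erase_insert
      intro hnC
      have := hC.1 hnC
      rw [Finset.mem_Icc] at this
      omega
    · intro B hB
      simp only [Finset.mem_filter, Finset.mem_powerset] at hB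
      obtain ⟨⟨hsub, hcB, hnB⟩, hmB⟩ := hB
      have hmE : n - 1 ∈ B.erase n := Finset.mem_erase.mpr ⟨by omega, hmB⟩
      have hneE : (B.erase n).Nonempty := ⟨_, hmE⟩
      have hlt : ∀ x ∈ B.erase n, x < n := by
        intro x hx
        rw [Finset.mem_erase] at hx
        have := hsub hx.2
        rw [Finset.mem_Icc] at this
        omega
      have hmax : (B.erase n).max' hneE = n - 1 := by
        apply le_antisymm
        · apply Finset.max'_le
          intro x hx
          have := hlt x hx; omega
        · exact Finset.le_max' _ _ hmE
      calc etaOf f B = etaOf f (insert n (B.erase n)) := by rw [Finset.insert_erase hnB]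
        _ = etaOf f (B.erase n) * (f n - f ((B.erase n).max' hneE) - 1) :=
            eta_insert_top f hneE hlt
        _ = (f n - f (n-1) - 1) * etaOf f (B.erase n) := by rw [hmax]; ring
  · -- part with n-1 ∉ B
    rw [SG]
    refine Finset.sum_nbij' (fun B => insert (n-1) (B.erase n))
      (fun C => insert n (C.erase (n-1))) ?_ ?_ ?_ ?_ ?_
    · intro B hB
      simp only [Finset.mem_filter, Finset.mem_powerset] at hB ⊢
      obtain ⟨⟨hsub, hcB, hnB⟩, hmB⟩ := hB
      refine ⟨?_, ?_, Finset.mem_insert_self _ _⟩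
      · intro x hx
        rcases Finset.mem_insert.mp hx with rfl | hx
        · rw [Finset.mem_Icc]; omega
        · rw [Finset.mem_erase] at hx
          have := hsub hx.2
          rw [Finset.mem_Icc] at this ⊢
          omega
      · rw [hc (n-1) _ (Or.inr rfl)]
        have : B = insert n (B.erase n) := (Finset.insert_erase hnB).symm
        rw [← hc n (B.erase n) (Or.inl rfl), ← this]; exact hcB
    · intro C hC
      simp only [Finset.mem_filter, Finset.mem_powerset] at hC ⊢
      obtain ⟨hsub, hcC, hmC⟩ := hC
      have hm : n - 1 ∉ C.erase (n-1) := Finset.notMem_erase _ _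
      refine ⟨⟨?_, ?_, Finset.mem_insert_self _ _⟩, ?_⟩
      · intro x hx
        rcases Finset.mem_insert.mp hx with rfl | hx
        · rw [Finset.mem_Icc]; omega
        · rw [Finset.mem_erase] at hx
          have := hsub hx.2; rw [Finset.mem_Icc] at this ⊢; omega
      · rw [hc n _ (Or.inl rfl), ← hc (n-1) (C.erase (n-1)) (Or.inr rfl),
          Finset.insert_erase hmC]
        exact hcC
      · simp only [Finset.mem_insert]
        push_neg
        exact ⟨by omega, hm⟩
    · intro B hB
      simp only [Finset.mem_filter, Finset.mem_powerset] at hB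
      obtain ⟨⟨hsub, hcB, hnB⟩, hmB⟩ := hB
      have h1 : (insert (n-1) (B.erase n)).erase (n-1) = B.erase n := by
        apply Finset.erase_insert
        exact fun hx => hmB (Finset.mem_of_mem_erase hx)
      show insert n ((insert (n-1) (B.erase n)).erase (n-1)) = B
      rw [h1, Finset.insert_erase hnB]
    · intro C hC
      simp only [Finset.mem_filter, Finset.mem_powerset] at hC
      obtain ⟨hsub, hcC, hmC⟩ := hC
      have h1 : (insert n (C.erase (n-1))).erase n = C.erase (n-1) := by
        apply Finset.erase_insert
        intro hx
        have := hsub (Finset.mem_of_mem_erase hx)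
        rw [Finset.mem_Icc] at this
        omega
      show insert (n-1) ((insert n (C.erase (n-1))).erase n) = C
      rw [h1, Finset.insert_erase hmC]
    · intro B hB
      simp only [Finset.mem_filter, Finset.mem_powerset] at hB
      obtain ⟨⟨hsub, hcB, hnB⟩, hmB⟩ := hB
      have hlt : ∀ x ∈ B.erase n, x < n - 1 := by
        intro x hx
        rw [Finset.mem_erase] at hx
        have h1 := hsub hx.2
        rw [Finset.mem_Icc] at h1
        have : x ≠ n - 1 := fun h => hmB (h ▸ hx.2)
        omega
      rw [eta_swap_top f (B.erase n) hlt hnn, Finset.insert_erase hnB]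

end App18

namespace App18

lemma prod_split_top (f : ℕ → R) {a n : ℕ} (h : a ≤ n) (ha : 1 ≤ a) :
    ∏ j ∈ Finset.Icc a n, (f j - f (j-1) + 1)
      = (∏ j ∈ Finset.Icc a (n-1), (f j - f (j-1) + 1)) * (f n - f (n-1) + 1) := by
  have h1 : n = (n-1) + 1 := by omega
  conv_lhs => rw [h1]
  rw [Finset.prod_Icc_succ_top (by omega)]
  rw [show n - 1 + 1 = n by omega]

lemma SA_formula : ∀ n : ℕ, 2 ≤ n → ∀ f : ℕ → R,
    SG f (fun _ => true) n
      = (f n - f (n-1)) * ∏ j ∈ Finset.Icc 2 (n-1), (f j - f (j-1) + 1) := by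
  intro n hn
  induction n, hn using Nat.le_induction with
  | base =>
    intro f
    rw [SG_rec f _ 2 le_rfl (by intros; rfl), SG_one, SG_one]
    simp
  | succ n hn ih =>
    intro f
    rw [SG_rec f _ (n+1) (by omega) (by intros; rfl)]
    have e1 : n + 1 - 1 = n := rfl
    rw [e1, ih f, ih (Function.update f n (f (n+1)))]
    have hg1 : Function.update f n (f (n+1)) n = f (n+1) := Function.update_self _ _ _
    have hg2 : Function.update f n (f (n+1)) (n-1) = f (n-1) :=
      Function.update_of_ne (by omega) _ _
    have hg3 : ∏ j ∈ Finset.Icc 2 (n-1), (Function.update f n (f (n+1)) j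
          - Function.update f n (f (n+1)) (j-1) + 1)
        = ∏ j ∈ Finset.Icc 2 (n-1), (f j - f (j-1) + 1) := by
      apply Finset.prod_congr rfl
      intro j hj
      rw [Finset.mem_Icc] at hj
      rw [Function.update_of_ne (by omega) _ _, Function.update_of_ne (by omega) _ _]
    rw [hg1, hg2, hg3, prod_split_top (a := 2) (n := n) f (by omega) (by omega)]
    ring

lemma ST_two (f : ℕ → R) :
    SG f (fun B => decide (1 ∈ B)) 2 = f 2 - f 1 - 1 := by
  have h1 : Finset.Icc 1 2 = {1, 2} := by decide
  have h2 : ({1, 2} : Finset ℕ).powerset = {∅, {1}, {2}, {1, 2}} := by decide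
  have h3 : ({1, 2} : Finset ℕ).sort (· ≤ ·) = [1, 2] := by
    rw [show ({1, 2} : Finset ℕ) = insert 1 {2} from rfl,
      Finset.sort_insert (· ≤ ·) (by simp) (by simp), Finset.sort_singleton]
  simp [SG, h1, h2, Finset.filter_insert, Finset.filter_singleton, etaOf, h3]

lemma hc1 {k : ℕ} (hk : 3 ≤ k) : ∀ (m : ℕ) (B : Finset ℕ), m = k ∨ m = k - 1 →
    (fun B => decide (1 ∈ B)) (insert m B) = (fun B => decide (1 ∈ B)) B := by
  intro m B hm
  have hm1 : m ≠ 1 := by omega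
  simp only [decide_eq_decide, Finset.mem_insert]
  constructor
  · rintro (h | h)
    · exact absurd h.symm hm1
    · exact h
  · exact Or.inr

lemma ST_formula : ∀ n : ℕ, 3 ≤ n → ∀ f : ℕ → R,
    SG f (fun B => decide (1 ∈ B)) n
      = (f 2 - f 1) * (f n - f (n-1)) * ∏ j ∈ Finset.Icc 3 (n-1), (f j - f (j-1) + 1) := by
  intro n hn
  induction n, hn using Nat.le_induction with
  | base =>
    intro f
    rw [SG_rec f _ 3 (by omega) (hc1 le_rfl)]
    have e1 : (3 : ℕ) - 1 = 2 := rfl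
    rw [e1, ST_two, ST_two, Function.update_self, Function.update_of_ne (by omega)]
    simp
    ring
  | succ n hn ih =>
    intro f
    rw [SG_rec f _ (n+1) (by omega) (hc1 (by omega))]
    have e1 : n + 1 - 1 = n := rfl
    rw [e1, ih f, ih (Function.update f n (f (n+1)))]
    have hg1 : Function.update f n (f (n+1)) n = f (n+1) := Function.update_self _ _ _
    have hg2 : Function.update f n (f (n+1)) (n-1) = f (n-1) :=
      Function.update_of_ne (by omega) _ _
    have hg4 : Function.update f n (f (n+1)) 2 = f 2 := Function.update_of_ne (by omega) _ _
    have hg5 : Function.update f n (f (n+1)) 1 = f 1 := Function.update_of_ne (by omega) _ _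
    have hg3 : ∏ j ∈ Finset.Icc 3 (n-1), (Function.update f n (f (n+1)) j
          - Function.update f n (f (n+1)) (j-1) + 1)
        = ∏ j ∈ Finset.Icc 3 (n-1), (f j - f (j-1) + 1) := by
      apply Finset.prod_congr rfl
      intro j hj
      rw [Finset.mem_Icc] at hj
      rw [Function.update_of_ne (by omega) _ _, Function.update_of_ne (by omega) _ _]
    rw [hg1, hg2, hg3, hg4, hg5, prod_split_top (a := 3) (n := n) f (by omega) (by omega)]
    ring

end App18

namespace App18

lemma max'_cond_iff {n : ℕ} (hn : 1 ≤ n) (f : ℕ → R) (hf : Set.InjOn f (Set.Icc 1 n))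
    {B : Finset ℕ} (hsub : B ⊆ Finset.Icc 1 n) (hne : B.Nonempty) :
    f (B.max' hne) = f n ↔ n ∈ B := by
  have hmem := B.max'_mem hne
  have hIcc := Finset.mem_Icc.mp (hsub hmem)
  constructor
  · intro h
    have : B.max' hne = n :=
      hf (Set.mem_Icc.mpr ⟨hIcc.1, hIcc.2⟩) (Set.mem_Icc.mpr ⟨hn, le_rfl⟩) h
    exact this ▸ hmem
  · intro h
    have : B.max' hne = n := le_antisymm hIcc.2 (Finset.le_max' _ _ h)
    rw [this]

lemma min'_cond_iff {n : ℕ} (hn : 1 ≤ n) (f : ℕ → R) (hf : Set.InjOn f (Set.Icc 1 n))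
    {B : Finset ℕ} (hsub : B ⊆ Finset.Icc 1 n) (hne : B.Nonempty) :
    f (B.min' hne) = f 1 ↔ 1 ∈ B := by
  have hmem := B.min'_mem hne
  have hIcc := Finset.mem_Icc.mp (hsub hmem)
  constructor
  · intro h
    have : B.min' hne = 1 :=
      hf (Set.mem_Icc.mpr ⟨hIcc.1, hIcc.2⟩) (Set.mem_Icc.mpr ⟨le_rfl, hn⟩) h
    exact this ▸ hmem
  · intro h
    have : B.min' hne = 1 := le_antisymm (Finset.min'_le _ _ h) hIcc.1
    rw [this]

end App18

/-- appendix constrained summation identities. Let f₁, …, fₙ be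
distinct elements of a commutative unital ring and F = {f₁,…,fₙ}. Then
(1) if n ≥ 2, ∑_{B⊆F, max(B)=fₙ} η(B) = (fₙ − f_{n−1}) ∏_{j=2}^{n−1} (f_j − f_{j−1} + 1);
(2) if n ≥ 3, ∑_{B⊆F, min(B)=f₁, max(B)=fₙ} η(B)
      = (f₂ − f₁)(fₙ − f_{n−1}) ∏_{j=3}^{n−1} (f_j − f_{j−1} + 1). -/
theorem appendix_constrained_summation_identities [DecidableEq R]
    (n : ℕ) (f : ℕ → R) (hf : Set.InjOn f (Set.Icc 1 n)) :
    (2 ≤ n →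
      ∑ B ∈ ((Finset.Icc 1 n).powerset.filter (fun B => B ≠ ∅)).attach,
        (if f (B.1.max' (Finset.nonempty_iff_ne_empty.mpr
              (Finset.mem_filter.mp B.2).2)) = f n
         then etaOf f B.1 else 0)
      = (f n - f (n-1)) * ∏ j ∈ Finset.Icc 2 (n-1), (f j - f (j-1) + 1)) ∧
    (3 ≤ n →
      ∑ B ∈ ((Finset.Icc 1 n).powerset.filter (fun B => B ≠ ∅)).attach,
        (if f (B.1.min' (Finset.nonempty_iff_ne_empty.mpr
              (Finset.mem_filter.mp B.2).2)) = f 1 ∧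
            f (B.1.max' (Finset.nonempty_iff_ne_empty.mpr
              (Finset.mem_filter.mp B.2).2)) = f n
         then etaOf f B.1 else 0)
      = (f 2 - f 1) * (f n - f (n-1)) *
          ∏ j ∈ Finset.Icc 3 (n-1), (f j - f (j-1) + 1)) := by
  constructor
  · intro hn
    calc ∑ B ∈ ((Finset.Icc 1 n).powerset.filter (fun B => B ≠ ∅)).attach,
          (if f (B.1.max' (Finset.nonempty_iff_ne_empty.mpr
              (Finset.mem_filter.mp B.2).2)) = f n
           then etaOf f B.1 else 0)
        = ∑ B ∈ ((Finset.Icc 1 n).powerset.filter (fun B => B ≠ ∅)).attach,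
            (if n ∈ B.1 then etaOf f B.1 else 0) := by
          apply Finset.sum_congr rfl
          intro B _
          have hB := Finset.mem_filter.mp B.2
          have hsub := Finset.mem_powerset.mp hB.1
          have hne : B.1.Nonempty := Finset.nonempty_iff_ne_empty.mpr hB.2
          rw [if_congr (App18.max'_cond_iff (by omega) f hf hsub _) rfl rfl]
      _ = ∑ B ∈ (Finset.Icc 1 n).powerset.filter (fun B => B ≠ ∅),
            (if n ∈ B then etaOf f B else 0) :=
          Finset.sum_attach _ (fun B => if n ∈ B then etaOf f B else 0)
      _ = ∑ B ∈ ((Finset.Icc 1 n).powerset.filter (fun B => B ≠ ∅)).filter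
            (fun B => n ∈ B), etaOf f B := (Finset.sum_filter _ _).symm
      _ = App18.SG f (fun _ => true) n := by
          rw [App18.SG, Finset.filter_filter]
          apply Finset.sum_congr _ (fun _ _ => rfl)
          apply Finset.filter_congr
          intro B _
          constructor
          · rintro ⟨-, h⟩; exact ⟨rfl, h⟩
          · rintro ⟨-, h⟩
            exact ⟨fun he => by simp [he] at h, h⟩
      _ = (f n - f (n-1)) * ∏ j ∈ Finset.Icc 2 (n-1), (f j - f (j-1) + 1) :=
          App18.SA_formula n hn f
  · intro hn
    calc ∑ B ∈ ((Finset.Icc 1 n).powerset.filter (fun B => B ≠ ∅)).attach,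
          (if f (B.1.min' (Finset.nonempty_iff_ne_empty.mpr
              (Finset.mem_filter.mp B.2).2)) = f 1 ∧
            f (B.1.max' (Finset.nonempty_iff_ne_empty.mpr
              (Finset.mem_filter.mp B.2).2)) = f n
           then etaOf f B.1 else 0)
        = ∑ B ∈ ((Finset.Icc 1 n).powerset.filter (fun B => B ≠ ∅)).attach,
            (if 1 ∈ B.1 ∧ n ∈ B.1 then etaOf f B.1 else 0) := by
          apply Finset.sum_congr rfl
          intro B _
          have hB := Finset.mem_filter.mp B.2
          have hsub := Finset.mem_powerset.mp hB.1
          have hne : B.1.Nonempty := Finset.nonempty_iff_ne_empty.mpr hB.2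
          rw [if_congr (and_congr (App18.min'_cond_iff (by omega) f hf hsub _)
            (App18.max'_cond_iff (by omega) f hf hsub _)) rfl rfl]
      _ = ∑ B ∈ (Finset.Icc 1 n).powerset.filter (fun B => B ≠ ∅),
            (if 1 ∈ B ∧ n ∈ B then etaOf f B else 0) :=
          Finset.sum_attach _ (fun B => if 1 ∈ B ∧ n ∈ B then etaOf f B else 0)
      _ = ∑ B ∈ ((Finset.Icc 1 n).powerset.filter (fun B => B ≠ ∅)).filter
            (fun B => 1 ∈ B ∧ n ∈ B), etaOf f B := (Finset.sum_filter _ _).symm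
      _ = App18.SG f (fun B => decide (1 ∈ B)) n := by
          rw [App18.SG, Finset.filter_filter]
          apply Finset.sum_congr _ (fun _ _ => rfl)
          apply Finset.filter_congr
          intro B _
          constructor
          · rintro ⟨-, h1, h2⟩; exact ⟨by simp [h1], h2⟩
          · rintro ⟨h1, h2⟩
            refine ⟨fun he => by simp [he] at h2, by simpa using h1, h2⟩
      _ = (f 2 - f 1) * (f n - f (n-1)) *
            ∏ j ∈ Finset.Icc 3 (n-1), (f j - f (j-1) + 1) :=
          App18.ST_formula n hn f
end
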